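/- arXiv:2212.01702 — 6 statements merged into one kernel-verified Lean document; each statement's English description precedes it below -/
import Mathlib

section
/- For all d ≥ 1 and m ≥ 0, the number A_{2m}^{(d+1)} of closed walks of length 2m in Z^{d+1} satisfies A_{2m}^{(d+1)} = binomial(2m,m) * sum_{k=0}^{m} binomial(m,k)^2 * A_{2k}^{(d)} / binomial(2k,k). -/
/-- The step of the walk on `ℤ^d` determined by a coordinate and a sign. -/
def stepVec (d : ℕ) (s : Fin d × Bool) : Fin d → ℤ :=
  fun t => if t = s.1 then (if s.2 then 1 else -1) else 0

/-- `closedCount d n` is the number `A_{2n}^{(d)}` of walks of length `2n` on `ℤ^d`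
starting and ending at the origin. -/
noncomputable def closedCount (d n : ℕ) : ℕ :=
  Nat.card {f : Fin (2 * n) → Fin d × Bool // ∑ i, stepVec d (f i) = 0}


open Finset

/-- walk count with arbitrary length -/
noncomputable def ccF (d n : ℕ) : ℕ :=
  Nat.card {f : Fin n → Fin d × Bool // ∑ i, stepVec d (f i) = 0}

lemma closedCount_eq (d k : ℕ) : closedCount d k = ccF d (2 * k) := rfl

lemma ccF_eq_card (d : ℕ) (ι : Type) [Fintype ι] :
    Nat.card {f : ι → Fin d × Bool // ∑ i, stepVec d (f i) = 0} = ccF d (Fintype.card ι) := by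
  apply Nat.card_congr
  refine Equiv.subtypeEquiv (Equiv.arrowCongr (Fintype.equivFin ι) (Equiv.refl _)) (fun f => ?_)
  rw [← Equiv.sum_comp (Fintype.equivFin ι).symm (fun i => stepVec d (f i))]
  simp [Equiv.arrowCongr]

def balCount (n : ℕ) : ℕ := if Even n then n.choose (n / 2) else 0

lemma bal_card (ι : Type) [Fintype ι] [DecidableEq ι] :
    Nat.card {g : ι → Bool // ∑ i, (if g i then (1:ℤ) else -1) = 0} =
      balCount (Fintype.card ι) := by
  have key : ∀ g : ι → Bool, (∑ i, (if g i then (1:ℤ) else -1)) =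
      2 * (univ.filter (fun i => g i = true)).card - Fintype.card ι := by
    intro g
    have h1 : ∀ i, (if g i then (1:ℤ) else -1) = 2 * (if g i = true then (1:ℤ) else 0) - 1 := by
      intro i; cases h : g i <;> simp [h]
    rw [Finset.sum_congr rfl (fun i _ => h1 i), Finset.sum_sub_distrib, ← Finset.mul_sum,
      Finset.sum_boole, Finset.sum_const, Finset.card_univ]
    simp
  rcases Nat.even_or_odd (Fintype.card ι) with he | ho
  · obtain ⟨t, ht⟩ := he
    have e1 : {g : ι → Bool // ∑ i, (if g i then (1:ℤ) else -1) = 0} ≃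
        {T : Finset ι // T.card = t} := by
      refine Equiv.subtypeEquiv ⟨fun g => univ.filter (fun i => g i = true),
        fun T i => decide (i ∈ T), ?_, ?_⟩ ?_
      · intro g; funext i; by_cases h : g i = true <;> simp [h]
      · intro T; ext i; simp
      · intro g
        rw [key g, ht]
        constructor
        · intro h
          simp only [Equiv.coe_fn_mk]
          omega
        · intro h
          simp only [Equiv.coe_fn_mk] at h
          omega
    rw [Nat.card_congr e1]
    rw [Nat.card_congr (Equiv.subtypeEquivRight
      (fun T => (Finset.mem_powersetCard_univ (s := T) (k := t)).symm))]
    rw [Nat.card_eq_fintype_card, Fintype.card_coe, Finset.card_powersetCard,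
      Finset.card_univ, balCount, if_pos ⟨t, ht⟩]
    congr 1
    omega
  · have : IsEmpty {g : ι → Bool // ∑ i, (if g i then (1:ℤ) else -1) = 0} := by
      constructor
      rintro ⟨g, hg⟩
      rw [key g] at hg
      obtain ⟨t, ht⟩ := ho
      rw [ht] at hg
      push_cast at hg
      omega
    rw [Nat.card_of_isEmpty, balCount, if_neg (Nat.not_even_iff_odd.mpr ho)]


def rawEquiv (d n : ℕ) (S : Finset (Fin n)) :
    {f : Fin n → Fin (d+1) × Bool // ∀ i, (f i).1 = Fin.last d ↔ i ∈ S} ≃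
      ((↥S → Bool) × (↥(Sᶜ) → Fin d × Bool)) where
  toFun f := (fun i => (f.1 i.1).2,
    fun i => ⟨((f.1 i.1).1).castPred (fun h => (Finset.mem_compl.mp i.2) ((f.2 i.1).mp h)),
      (f.1 i.1).2⟩)
  invFun p := ⟨fun i => if hi : i ∈ S then (Fin.last d, p.1 ⟨i, hi⟩)
      else (Fin.castSucc (p.2 ⟨i, Finset.mem_compl.mpr hi⟩).1,
        (p.2 ⟨i, Finset.mem_compl.mpr hi⟩).2),
    by
      intro i
      by_cases hi : i ∈ S
      · simp [hi]
      · simp only [dif_neg hi]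
        exact ⟨fun h => absurd h (Fin.castSucc_lt_last _).ne, fun h => absurd h hi⟩⟩
  left_inv f := by
    apply Subtype.ext
    funext i
    by_cases hi : i ∈ S
    · simp only [dif_pos hi]
      exact Prod.ext ((f.2 i).mpr hi).symm rfl
    · simp only [dif_neg hi]
      exact Prod.ext (Fin.castSucc_castPred _ _) rfl
  right_inv p := by
    apply Prod.ext
    · funext i
      simp [i.2]
    · funext i
      have hi : i.1 ∉ S := Finset.mem_compl.mp i.2
      simp [hi]

lemma cond_iff (d n : ℕ) (S : Finset (Fin n)) (f : Fin n → Fin (d+1) × Bool)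
    (hf : ∀ i, (f i).1 = Fin.last d ↔ i ∈ S) :
    (∑ i, stepVec (d+1) (f i) = 0) ↔
      ((∑ i : ↥S, (if (f i.1).2 then (1:ℤ) else -1)) = 0 ∧
        ∑ i : ↥(Sᶜ),
          stepVec d (((f i.1).1).castPred (fun h => (Finset.mem_compl.mp i.2) ((hf i.1).mp h)),
            (f i.1).2) = 0) := by
  have hlast : ∑ i, stepVec (d+1) (f i) (Fin.last d) =
      ∑ i : ↥S, (if (f i.1).2 then (1:ℤ) else -1) := by
    rw [Finset.sum_coe_sort S (fun i => if (f i).2 then (1:ℤ) else -1)]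
    rw [← Finset.sum_subset (Finset.subset_univ S) (fun i _ hi => ?_)]
    · refine Finset.sum_congr rfl (fun i hi => ?_)
      have h1 : (f i).1 = Fin.last d := (hf i).mpr hi
      simp [stepVec, h1]
    · have h1 : (f i).1 ≠ Fin.last d := fun h => hi ((hf i).mp h)
      simp only [stepVec]
      rw [if_neg (fun h => h1 h.symm)]
  have hcast : ∀ t : Fin d, ∑ i, stepVec (d+1) (f i) (Fin.castSucc t) =
      ∑ i : ↥(Sᶜ),
        stepVec d (((f i.1).1).castPred (fun h => (Finset.mem_compl.mp i.2) ((hf i.1).mp h)),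
          (f i.1).2) t := by
    intro t
    have hne : ∀ i ∈ Sᶜ, (f i).1 ≠ Fin.last d :=
      fun i hi h => (Finset.mem_compl.mp hi) ((hf i).mp h)
    have step1 : ∑ i, stepVec (d+1) (f i) (Fin.castSucc t)
        = ∑ i ∈ Sᶜ, stepVec (d+1) (f i) (Fin.castSucc t) := by
      refine (Finset.sum_subset (Finset.subset_univ _) (fun i _ hi => ?_)).symm
      have h1 : (f i).1 = Fin.last d := (hf i).mpr (by simpa using hi)
      simp only [stepVec, h1]
      rw [if_neg (fun h => (Fin.castSucc_lt_last t).ne h)]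
    rw [step1,
      ← Finset.sum_coe_sort (Sᶜ) (fun i => stepVec (d+1) (f i) (Fin.castSucc t))]
    refine Finset.sum_congr rfl (fun i _ => ?_)
    have hne' : (f i.1).1 ≠ Fin.last d := hne i.1 i.2
    have hiff : (Fin.castSucc t = (f i.1).1) ↔ (t = (f i.1).1.castPred hne') := by
      conv_lhs => rw [← Fin.castSucc_castPred (f i.1).1 hne']
      exact Fin.castSucc_inj
    simp only [stepVec, hiff]
  constructor
  · intro h
    have h' : ∀ t, ∑ i, stepVec (d+1) (f i) t = 0 := by
      intro t
      have := congrFun h t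
      simpa [Finset.sum_apply] using this
    constructor
    · rw [← hlast]; exact h' _
    · funext t
      rw [Pi.zero_apply, Finset.sum_apply, ← hcast t]
      exact h' _
  · rintro ⟨h1, h2⟩
    funext t
    rw [Finset.sum_apply, Pi.zero_apply]
    refine Fin.lastCases ?_ ?_ t
    · rw [hlast]; exact h1
    · intro t'
      rw [hcast t']
      have := congrFun h2 t'
      simpa [Finset.sum_apply] using this


lemma card_fiber (d m : ℕ) (S : Finset (Fin (2*m))) :
    Nat.card {f : Fin (2*m) → Fin (d+1) × Bool //
        (∑ i, stepVec (d+1) (f i) = 0) ∧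
          univ.filter (fun i => (f i).1 = Fin.last d) = S} =
      balCount S.card * ccF d (2*m - S.card) := by
  classical
  have hQ : ∀ f : Fin (2*m) → Fin (d+1) × Bool,
      ((∑ i, stepVec (d+1) (f i) = 0) ∧
          univ.filter (fun i => (f i).1 = Fin.last d) = S) ↔
        ((∀ i, (f i).1 = Fin.last d ↔ i ∈ S) ∧ (∑ i, stepVec (d+1) (f i) = 0)) := by
    intro f
    rw [and_comm]
    apply and_congr_left'
    constructor
    · intro h i
      rw [← h]; simp
    · intro h; ext i; simp [h i]
  have e1 := Equiv.subtypeEquivRight hQ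
  have e2 := (Equiv.subtypeSubtypeEquivSubtypeInter
    (fun f : Fin (2*m) → Fin (d+1) × Bool => ∀ i, (f i).1 = Fin.last d ↔ i ∈ S)
    (fun f => ∑ i, stepVec (d+1) (f i) = 0)).symm
  have e3 := Equiv.subtypeEquiv (p := fun x : {f : Fin (2*m) → Fin (d+1) × Bool //
        ∀ i, (f i).1 = Fin.last d ↔ i ∈ S} => ∑ i, stepVec (d+1) (x.1 i) = 0)
    (q := fun y : ((↥S → Bool) × (↥(Sᶜ) → Fin d × Bool)) =>
      ((∑ i : ↥S, (if y.1 i then (1:ℤ) else -1)) = 0) ∧ (∑ i, stepVec d (y.2 i) = 0))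
    (rawEquiv d (2*m) S) (fun x => cond_iff d (2*m) S x.1 x.2)
  have e4 := Equiv.subtypeProdEquivProd
    (p := fun g : ↥S → Bool => (∑ i : ↥S, (if g i then (1:ℤ) else -1)) = 0)
    (q := fun h : ↥(Sᶜ) → Fin d × Bool => ∑ i, stepVec d (h i) = 0)
  rw [Nat.card_congr (((e1.trans e2).trans e3).trans e4), Nat.card_prod,
    bal_card, ccF_eq_card, Fintype.card_coe, Fintype.card_coe, Finset.card_compl,
    Fintype.card_fin]

lemma nat_card_sigma {ι : Type} [Fintype ι] (β : ι → Type) [∀ i, Fintype (β i)] :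
    Nat.card (Σ i, β i) = ∑ i, Nat.card (β i) := by
  simp [Nat.card_eq_fintype_card, Fintype.card_sigma]

lemma decomposition (d m : ℕ) :
    closedCount (d+1) m = ∑ S : Finset (Fin (2*m)), balCount S.card * ccF d (2*m - S.card) := by
  classical
  show Nat.card {f : Fin (2*m) → Fin (d+1) × Bool // ∑ i, stepVec (d+1) (f i) = 0} = _
  rw [Nat.card_congr (Equiv.sigmaFiberEquiv
    (fun p : {f : Fin (2*m) → Fin (d+1) × Bool // ∑ i, stepVec (d+1) (f i) = 0} =>
      univ.filter (fun i => (p.1 i).1 = Fin.last d))).symm]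
  rw [nat_card_sigma]
  refine Finset.sum_congr rfl (fun S _ => ?_)
  rw [← card_fiber d m S]
  exact Nat.card_congr (Equiv.subtypeSubtypeEquivSubtypeInter
    (fun f : Fin (2*m) → Fin (d+1) × Bool => ∑ i, stepVec (d+1) (f i) = 0)
    (fun f => univ.filter (fun i => (f i).1 = Fin.last d) = S))


lemma group_sum (n : ℕ) (F : ℕ → ℕ) :
    ∑ S : Finset (Fin n), F S.card = ∑ s ∈ range (n+1), n.choose s * F s := by
  classical
  rw [← Finset.sum_fiberwise_of_maps_to (g := Finset.card) (t := range (n+1))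
    (fun S _ => by
      simp only [Finset.mem_range]
      exact Nat.lt_succ_of_le (by simpa using Finset.card_le_univ S))
    (fun S => F S.card)]
  refine Finset.sum_congr rfl (fun s hs => ?_)
  have h1 : (univ.filter (fun S : Finset (Fin n) => S.card = s)) = univ.powersetCard s := by
    rw [Finset.powersetCard_eq_filter, Finset.powerset_univ]
  calc ∑ S ∈ univ.filter (fun S : Finset (Fin n) => S.card = s), F S.card
      = ∑ S ∈ univ.filter (fun S : Finset (Fin n) => S.card = s), F s := by
        refine Finset.sum_congr rfl (fun T hT => ?_)
        rw [(Finset.mem_filter.mp hT).2]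
    _ = (univ.filter (fun S : Finset (Fin n) => S.card = s)).card * F s := by
        rw [Finset.sum_const, smul_eq_mul]
    _ = n.choose s * F s := by
        rw [h1, Finset.card_powersetCard, Finset.card_univ, Fintype.card_fin]

lemma nat_main (d m : ℕ) :
    closedCount (d+1) m =
      ∑ j ∈ range (m+1), (2*m).choose (2*j) * ((2*j).choose j * closedCount d (m-j)) := by
  rw [decomposition, group_sum (2*m) (fun s => balCount s * ccF d (2*m - s))]
  have hsub : (range (m+1)).image (fun j => 2*j) ⊆ range (2*m+1) := by
    intro s hs
    simp only [Finset.mem_image, Finset.mem_range] at hs ⊢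
    omega
  have hzero : ∀ s ∈ range (2*m+1), s ∉ (range (m+1)).image (fun j => 2*j) →
      (2*m).choose s * (balCount s * ccF d (2*m - s)) = 0 := by
    intro s hs hns
    simp only [Finset.mem_image, Finset.mem_range] at hs hns
    have hodd : ¬ Even s := by
      intro ⟨j, hj⟩
      exact hns ⟨j, by omega, by omega⟩
    rw [balCount, if_neg hodd]
    ring
  rw [← Finset.sum_subset hsub hzero, Finset.sum_image (fun a _ b _ h => by omega)]
  refine Finset.sum_congr rfl (fun j hj => ?_)
  have hj' : j ≤ m := by simpa [Nat.lt_succ_iff] using hj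
  have h1 : balCount (2*j) = (2*j).choose j := by
    rw [balCount, if_pos ⟨j, by omega⟩]
    congr 1
    omega
  have h2 : 2*m - 2*j = 2*(m-j) := by omega
  rw [h1, h2, ← closedCount_eq]

lemma key_fact (a b : ℕ) :
    ((2*(a+b)).choose (2*a) : ℚ) * (2*a).choose a * (2*b).choose b
      = (2*(a+b)).choose (a+b) * ((a+b).choose b)^2 := by
  have h1 : 2*(a+b) - 2*a = 2*b := by omega
  have h2 : 2*a - a = a := by omega
  have h3 : 2*b - b = b := by omega
  have h4 : 2*(a+b) - (a+b) = a+b := by omega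
  have h5 : (a+b) - b = a := by omega
  rw [Nat.cast_choose ℚ (by omega : 2*a ≤ 2*(a+b)),
      Nat.cast_choose ℚ (by omega : a ≤ 2*a),
      Nat.cast_choose ℚ (by omega : b ≤ 2*b),
      Nat.cast_choose ℚ (by omega : a+b ≤ 2*(a+b)),
      Nat.cast_choose ℚ (by omega : b ≤ a+b),
      h1, h2, h3, h4, h5]
  have fne : ∀ k : ℕ, ((Nat.factorial k : ℚ)) ≠ 0 :=
    fun k => Nat.cast_ne_zero.mpr (Nat.factorial_ne_zero k)
  field_simp


theorem closedCount_succ (d m : ℕ) (hd : 1 ≤ d) :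
    (closedCount (d + 1) m : ℚ) =
      ((2 * m).choose m : ℚ) *
        ∑ k ∈ Finset.range (m + 1),
          (m.choose k : ℚ) ^ 2 * (closedCount d k : ℚ) / ((2 * k).choose k : ℚ) := by
  rw [Finset.mul_sum, ← Finset.sum_range_reflect, nat_main d m]
  push_cast
  refine Finset.sum_congr rfl (fun j hj => ?_)
  have hj' : j ≤ m := by simpa [Nat.lt_succ_iff] using hj
  obtain ⟨b, rfl⟩ : ∃ b, m = j + b := ⟨m - j, by omega⟩
  have hb : j + b - j = b := by omega
  rw [hb]
  have hne : ((2*b).choose b : ℚ) ≠ 0 :=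
    Nat.cast_ne_zero.mpr (Nat.choose_pos (by omega)).ne'
  field_simp
  linear_combination (closedCount d b : ℚ) * key_fact j b
end

section
/- For |w| < 1 and every integer n ≥ 0, sum_{m=0}^{∞} binomial(n+m, m)^2 w^m = (1-w)^{-2n-1} * sum_{k=0}^{n} binomial(n,k)^2 w^k. -/
open Finset

/-- Iterated forward difference of `x ↦ C(n+x, r)`. -/
lemma fwdDiff_chooseShift (n : ℕ) : ∀ j r : ℕ, j ≤ r →
    (fwdDiff 1)^[j] (fun x : ℕ => ((n + x).choose r : ℤ)) =
      fun x : ℕ => ((n + x).choose (r - j) : ℤ) := by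
  intro j
  induction j with
  | zero => intro r _; simp
  | succ j ih =>
    intro r hr
    have hr1 : 1 ≤ r := le_trans (Nat.succ_le_succ (Nat.zero_le j)) hr
    rw [Function.iterate_succ_apply]
    have hstep : fwdDiff 1 (fun x : ℕ => ((n + x).choose r : ℤ)) =
        fun x : ℕ => ((n + x).choose (r - 1) : ℤ) := by
      funext x
      have hP : (n + (x + 1)).choose r = (n + x).choose (r - 1) + (n + x).choose r := by
        have : n + (x + 1) = (n + x) + 1 := by omega
        rw [this, show r = (r - 1) + 1 by omega, Nat.choose_succ_succ]
        simp [Nat.succ_eq_add_one]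
      simp only [fwdDiff, hP]
      push_cast
      ring
    rw [hstep, ih (r - 1) (by omega)]
    funext x
    congr 2
    omega

/-- Alternating sum identity, integer version. -/
lemma altZ (j n : ℕ) (h : j ≤ n) :
    ∑ k ∈ range (j + 1), (-1 : ℤ) ^ (j - k) * (j.choose k) * ((n + k).choose n) =
      (n.choose j : ℤ) := by
  have key := fwdDiff_iter_eq_sum_shift (h := (1 : ℕ))
    (fun x : ℕ => ((n + x).choose n : ℤ)) j 0
  rw [fwdDiff_chooseShift n j n h] at key
  simp only [zero_add, smul_eq_mul, mul_one, Nat.smul_one_eq_cast] at key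
  have : ((n + 0).choose (n - j) : ℤ) = (n.choose j : ℤ) := by
    rw [Nat.add_zero, Nat.choose_symm h]
  rw [this] at key
  rw [key]

/-- `C(n+m,n) C(m,k) = C(n+k,k) C(n+m,n+k)`. -/
lemma aux1 (n m k : ℕ) :
    (n + m).choose n * m.choose k = (n + k).choose k * (n + m).choose (n + k) := by
  rcases le_or_gt k m with hkm | hkm
  · have h1 : (n + m).choose m * m.choose k
        = (n + m).choose k * (n + m - k).choose (m - k) :=
      Nat.choose_mul (n := n + m) hkm
    have h2 : (n + m).choose (n + k) * (n + k).choose k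
        = (n + m).choose k * (n + m - k).choose (n + k - k) :=
      Nat.choose_mul (n := n + m) (Nat.le_add_left k n)
    have h3 : (n + m - k).choose (m - k) = (n + m - k).choose n :=
      Nat.choose_symm_of_eq_add (by omega)
    have h4 : (n + m).choose n = (n + m).choose m := Nat.choose_symm_add
    rw [h4, h1, h3]
    rw [mul_comm ((n + k).choose k), h2]
    congr 2
    omega
  · rw [Nat.choose_eq_zero_of_lt hkm,
      Nat.choose_eq_zero_of_lt (show n + m < n + k by omega), mul_zero, mul_zero]

/-- Vandermonde in the form `C(n+m,n) = ∑ C(n,k) C(m,k)`. -/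
lemma vander (n m : ℕ) :
    (n + m).choose n = ∑ k ∈ range (n + 1), n.choose k * m.choose k := by
  rw [Nat.add_choose_eq, Finset.Nat.sum_antidiagonal_eq_sum_range_succ_mk,
    ← Finset.sum_range_reflect]
  apply Finset.sum_congr rfl
  intro k hk
  simp only [Finset.mem_range] at hk
  have h1 : n + 1 - 1 - k = n - k := by omega
  rw [h1, Nat.choose_symm (by omega), show n - (n - k) = k by omega]

/-- Key decomposition of the squared binomial coefficient. -/
lemma star (n m : ℕ) :
    ((n + m).choose m) ^ 2 =
      ∑ k ∈ range (n + 1), n.choose k * (n + k).choose k * (n + m).choose (n + k) := by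
  have h : (n + m).choose m = (n + m).choose n := Nat.choose_symm_add.symm
  rw [h, pow_two]
  nth_rewrite 1 [vander n m]
  rw [Finset.sum_mul]
  apply Finset.sum_congr rfl
  intro k _
  rw [mul_assoc, mul_comm (m.choose k), aux1 n m k, ← mul_assoc]

/-- Triangle reindexing. -/
lemma tri (N : ℕ) (f : ℕ → ℕ → ℝ) :
    ∑ k ∈ range (N + 1), ∑ i ∈ range (N + 1 - k), f k i
      = ∑ j ∈ range (N + 1), ∑ k ∈ range (j + 1), f k (j - k) := by
  rw [Finset.sum_sigma', Finset.sum_sigma']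
  apply Finset.sum_nbij' (i := fun p => ⟨p.1 + p.2, p.1⟩) (j := fun p => ⟨p.2, p.1 - p.2⟩)
  · intro p hp
    simp only [Finset.mem_sigma, Finset.mem_range] at hp ⊢
    omega
  · intro p hp
    simp only [Finset.mem_sigma, Finset.mem_range] at hp ⊢
    omega
  · intro p hp
    simp only [Finset.mem_sigma, Finset.mem_range] at hp
    simp [Sigma.ext_iff]
  · intro p hp
    simp only [Finset.mem_sigma, Finset.mem_range] at hp
    simp [Sigma.ext_iff]
    omega
  · intro p hp
    simp

/-- Summability of shifted binomial-geometric series. -/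
lemma summableT (n K : ℕ) (hnK : n ≤ K) (w : ℝ) (hw : |w| < 1) :
    Summable (fun m : ℕ => ((n + m).choose K : ℝ) * w ^ m) := by
  apply Summable.of_norm
  have hg : Summable (fun m : ℕ => ((m + K).choose K : ℝ) * |w| ^ m) := by
    have h1 : ‖|w|‖ < 1 := by rwa [Real.norm_eq_abs, abs_abs]
    exact_mod_cast summable_choose_mul_geometric_of_norm_lt_one K h1
  apply Summable.of_nonneg_of_le (fun m => norm_nonneg _) _ hg
  intro m
  rw [norm_mul, norm_pow, Real.norm_eq_abs, Real.norm_eq_abs]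
  have h2 : |((n + m).choose K : ℝ)| = ((n + m).choose K : ℝ) :=
    abs_of_nonneg (by positivity)
  rw [h2]
  apply mul_le_mul_of_nonneg_right _ (pow_nonneg (abs_nonneg w) m)
  exact_mod_cast Nat.choose_le_choose K (by omega)

/-- Value of the shifted binomial-geometric series. -/
lemma tsumT (n k : ℕ) (w : ℝ) (hw : |w| < 1) :
    ∑' m : ℕ, ((n + m).choose (n + k) : ℝ) * w ^ m
      = w ^ k * (1 / (1 - w) ^ (n + k + 1)) := by
  have hs := summableT n (n + k) (by omega) w hw
  have h0 : ∑ i ∈ range k, ((n + i).choose (n + k) : ℝ) * w ^ i = 0 := by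
    apply Finset.sum_eq_zero
    intro i hi
    simp only [Finset.mem_range] at hi
    rw [Nat.choose_eq_zero_of_lt (by omega)]
    simp
  have key := Summable.sum_add_tsum_nat_add k hs
  rw [h0, zero_add] at key
  rw [← key]
  have hcg : ∀ i : ℕ, ((n + (i + k)).choose (n + k) : ℝ) * w ^ (i + k)
      = w ^ k * (((i + (n + k)).choose (n + k) : ℝ) * w ^ i) := by
    intro i
    rw [show n + (i + k) = i + (n + k) by omega, pow_add]
    ring
  rw [tsum_congr hcg, tsum_mul_left,
    tsum_choose_mul_geometric_of_norm_lt_one (n + k) (by rwa [Real.norm_eq_abs])]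

/-- The per-coefficient identity. -/
lemma perJ (n j : ℕ) (hj : j ≤ n) (w : ℝ) :
    ∑ k ∈ range (j + 1),
        ((n.choose k : ℝ) * ((n + k).choose k : ℝ) * w ^ k) *
          ((-w) ^ (j - k) * (((n - k).choose (j - k) : ℝ)))
      = (n.choose j : ℝ) ^ 2 * w ^ j := by
  have halt : ∑ k ∈ range (j + 1),
      (-1 : ℝ) ^ (j - k) * (j.choose k : ℝ) * ((n + k).choose n : ℝ) = (n.choose j : ℝ) := by
    have h := altZ j n hj
    have h' := congrArg (fun z : ℤ => (z : ℝ)) h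
    push_cast at h'
    exact h'
  have hterm : ∀ k ∈ range (j + 1),
      ((n.choose k : ℝ) * ((n + k).choose k : ℝ) * w ^ k) *
          ((-w) ^ (j - k) * (((n - k).choose (j - k) : ℝ)))
        = ((n.choose j : ℝ) * w ^ j) *
            ((-1 : ℝ) ^ (j - k) * (j.choose k : ℝ) * ((n + k).choose n : ℝ)) := by
    intro k hk
    simp only [Finset.mem_range] at hk
    have h1 : (-w : ℝ) ^ (j - k) = (-1 : ℝ) ^ (j - k) * w ^ (j - k) := by
      rw [neg_pow]
    have h2 : (w : ℝ) ^ k * w ^ (j - k) = w ^ j := by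
      rw [← pow_add]
      congr 1
      omega
    have h3 : n.choose k * ((n - k).choose (j - k)) = n.choose j * j.choose k :=
      (Nat.choose_mul (n := n) (by omega : k ≤ j)).symm
    have h3' : (n.choose k : ℝ) * ((n - k).choose (j - k) : ℝ)
        = (n.choose j : ℝ) * (j.choose k : ℝ) := by exact_mod_cast congrArg Nat.cast h3
    have h4 : ((n + k).choose k : ℝ) = ((n + k).choose n : ℝ) := by
      norm_cast
      exact Nat.choose_symm_add.symm
    calc ((n.choose k : ℝ) * ((n + k).choose k : ℝ) * w ^ k) *
          ((-w) ^ (j - k) * (((n - k).choose (j - k) : ℝ)))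
        = (-1 : ℝ) ^ (j - k) * ((n + k).choose n : ℝ) * (w ^ k * w ^ (j - k)) *
            ((n.choose k : ℝ) * ((n - k).choose (j - k) : ℝ)) := by
          rw [h1, h4]; ring
      _ = (-1 : ℝ) ^ (j - k) * ((n + k).choose n : ℝ) * w ^ j *
            ((n.choose j : ℝ) * (j.choose k : ℝ)) := by rw [h2, h3']
      _ = ((n.choose j : ℝ) * w ^ j) *
            ((-1 : ℝ) ^ (j - k) * (j.choose k : ℝ) * ((n + k).choose n : ℝ)) := by ring
  rw [Finset.sum_congr rfl hterm, ← Finset.mul_sum, halt]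
  ring

/-- The finite polynomial identity. -/
lemma IDn (n : ℕ) (w : ℝ) :
    ∑ k ∈ range (n + 1),
        ((n.choose k : ℝ) * ((n + k).choose k : ℝ)) * w ^ k * (1 - w) ^ (n - k)
      = ∑ j ∈ range (n + 1), (n.choose j : ℝ) ^ 2 * w ^ j := by
  have hexp : ∀ k ∈ range (n + 1),
      ((n.choose k : ℝ) * ((n + k).choose k : ℝ)) * w ^ k * (1 - w) ^ (n - k)
        = ∑ i ∈ range (n + 1 - k),
            ((n.choose k : ℝ) * ((n + k).choose k : ℝ) * w ^ k) *
              ((-w) ^ i * (((n - k).choose i : ℝ))) := by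
    intro k hk
    simp only [Finset.mem_range] at hk
    rw [show (1 : ℝ) - w = -w + 1 by ring, add_pow, show n + 1 - k = n - k + 1 by omega,
      Finset.mul_sum]
    apply Finset.sum_congr rfl
    intro i _
    simp only [one_pow, mul_one]
  rw [Finset.sum_congr rfl hexp,
    tri n (fun k i => ((n.choose k : ℝ) * ((n + k).choose k : ℝ) * w ^ k) *
      ((-w) ^ i * (((n - k).choose i : ℝ))))]
  apply Finset.sum_congr rfl
  intro j hj
  simp only [Finset.mem_range] at hj
  exact perJ n j (by omega) w

theorem binomial_square_tsum (n : ℕ) (w : ℝ) (hw : |w| < 1) :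
    ∑' m : ℕ, ((n + m).choose m : ℝ) ^ 2 * w ^ m =
      (1 - w)⁻¹ ^ (2 * n + 1) *
        ∑ k ∈ Finset.range (n + 1), (n.choose k : ℝ) ^ 2 * w ^ k := by
  have h1w : (1 : ℝ) - w ≠ 0 := by
    have : w < 1 := lt_of_le_of_lt (le_abs_self w) hw
    intro h; linarith [this]
  -- expand each term of the series and interchange
  have hterm : ∀ m : ℕ, ((n + m).choose m : ℝ) ^ 2 * w ^ m
      = ∑ k ∈ range (n + 1),
          ((n.choose k : ℝ) * ((n + k).choose k : ℝ)) *
            (((n + m).choose (n + k) : ℝ) * w ^ m) := by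
    intro m
    have h := star n m
    have h' := congrArg (fun z : ℕ => (z : ℝ)) h
    push_cast at h'
    calc ((n + m).choose m : ℝ) ^ 2 * w ^ m
        = (∑ k ∈ range (n + 1),
            (n.choose k : ℝ) * ((n + k).choose k : ℝ) * ((n + m).choose (n + k) : ℝ)) * w ^ m := by
          rw [← h']
      _ = _ := by
          rw [Finset.sum_mul]
          apply Finset.sum_congr rfl
          intro k _
          ring
  rw [tsum_congr hterm]
  rw [Summable.tsum_finsetSum (fun k _ => (summableT n (n + k) (by omega) w hw).mul_left _)]
  have hts : ∀ k ∈ range (n + 1),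
      ∑' m : ℕ, ((n.choose k : ℝ) * ((n + k).choose k : ℝ)) *
          (((n + m).choose (n + k) : ℝ) * w ^ m)
        = (1 - w)⁻¹ ^ (2 * n + 1) *
            (((n.choose k : ℝ) * ((n + k).choose k : ℝ)) * w ^ k * (1 - w) ^ (n - k)) := by
    intro k hk
    simp only [Finset.mem_range] at hk
    rw [tsum_mul_left, tsumT n k w hw]
    have hpow : (1 - w)⁻¹ ^ (2 * n + 1) * (1 - w) ^ (n - k)
        = (1 : ℝ) / (1 - w) ^ (n + k + 1) := by
      rw [show 2 * n + 1 = (n + k + 1) + (n - k) by omega, pow_add, mul_assoc,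
        inv_pow, inv_pow, inv_mul_cancel₀ (pow_ne_zero _ h1w), mul_one, one_div]
    rw [← hpow]
    ring
  rw [Finset.sum_congr rfl hts, ← Finset.mul_sum, IDn n w]
end

section
/- For |w| < 1 and every integer n ≥ 0, sum_{m=0}^{∞} binomial(n+m, m)^2 w^m = (1-w)^{-n-1} P_n((1+w)/(1-w)), where P_n is the n-th Legendre polynomial. -/
open Polynomial Finset

/-- The `n`-th Legendre polynomial over `ℝ`, via Rodrigues' formula. -/
noncomputable def legendre (n : ℕ) : Polynomial ℝ :=
  C ((1 : ℝ) / (2 ^ n * n.factorial)) * (fun q => derivative q)^[n] ((X ^ 2 - 1) ^ n)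

private lemma vand (a b : ℕ) :
    ∑ j ∈ Finset.range (b+1), a.choose j * b.choose j = (a+b).choose b := by
  rw [Nat.add_choose_eq, Finset.Nat.sum_antidiagonal_eq_sum_range_succ_mk]
  refine Finset.sum_congr rfl fun j hj => ?_
  simp only [Finset.mem_range] at hj
  rw [Nat.choose_symm (by omega : j ≤ b)]

private lemma legendre_eval1 (n : ℕ) (x : ℝ) :
    (legendre n).eval x =
      ∑ k ∈ range (n+1), (n.choose k : ℝ)^2 * ((x-1)/2)^k * ((x+1)/2)^(n-k) := by
  have h : ((X : ℝ[X])^2 - 1)^n = (X - C 1)^n * (X + C 1)^n := by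
    rw [← mul_pow]; congr 1; simp; ring
  rw [legendre, h, Polynomial.iterate_derivative_mul]
  simp only [Polynomial.iterate_derivative_X_sub_pow, Polynomial.iterate_derivative_X_add_pow]
  rw [eval_mul, eval_C, eval_finset_sum]
  rw [Finset.mul_sum]
  refine Finset.sum_congr rfl fun k hk => ?_
  simp only [Finset.mem_range] at hk
  have hk' : k ≤ n := by omega
  simp only [smul_mul_assoc, eval_smul, mul_smul_comm, eval_mul, eval_pow, eval_sub, eval_add,
    eval_X, eval_C, eval_one, smul_eq_mul, nsmul_eq_mul]
  have e1 : n - (n - k) = k := by omega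
  rw [e1]
  have h1 : (n.descFactorial (n-k) : ℝ) = (n-k).factorial * n.choose (n-k) := by
    rw_mod_cast [Nat.descFactorial_eq_factorial_mul_choose]
  have h2 : (n.descFactorial k : ℝ) = k.factorial * n.choose k := by
    rw_mod_cast [Nat.descFactorial_eq_factorial_mul_choose]
  have h3 : n.choose (n - k) = n.choose k := Nat.choose_symm hk'
  have h4 : (n.choose k : ℝ) * k.factorial * (n-k).factorial = n.factorial := by
    rw_mod_cast [Nat.choose_mul_factorial_mul_factorial hk']
  have h5 : ((2:ℝ))^k * 2^(n-k) = 2^n := by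
    rw [← pow_add]; congr 1; omega
  have hnf : (n.factorial : ℝ) ≠ 0 := Nat.cast_ne_zero.2 n.factorial_ne_zero
  field_simp [h1, h2, h3, div_pow]
  simp only [eval_natCast]
  rw [h1, h2, h3, div_pow, div_pow, ← h5, ← h4]
  field_simp

private lemma sumII (n : ℕ) (u : ℝ) :
    ∑ k ∈ range (n+1), (n.choose k : ℝ)^2 * u^k * (u+1)^(n-k) =
    ∑ t ∈ range (n+1), (n.choose t : ℝ) * ((n+t).choose t) * u^t := by
  have lhs_expand : ∀ k ∈ range (n+1),
      (n.choose k : ℝ)^2 * u^k * (u+1)^(n-k) =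
      ∑ i ∈ range (n-k+1), (n.choose k : ℝ)^2 * (n-k).choose i * u^(k+i) := by
    intro k hk
    rw [add_pow, Finset.mul_sum]
    refine Finset.sum_congr rfl fun i hi => ?_
    simp [pow_add]
    ring
  rw [Finset.sum_congr rfl lhs_expand]
  have rhs_expand : ∀ t ∈ range (n+1),
      (n.choose t : ℝ) * ((n+t).choose t) * u^t =
      ∑ j ∈ range (t+1), (n.choose t : ℝ) * (n.choose j * t.choose j) * u^t := by
    intro t ht
    rw [← vand n t]
    push_cast
    rw [Finset.mul_sum, Finset.sum_mul]
  rw [Finset.sum_congr rfl rhs_expand]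
  rw [Finset.sum_sigma', Finset.sum_sigma']
  refine Finset.sum_nbij' (fun p => ⟨p.1 + p.2, p.1⟩) (fun p => ⟨p.2, p.1 - p.2⟩) ?_ ?_ ?_ ?_ ?_
  · rintro ⟨k, i⟩ hp
    simp only [Finset.mem_sigma, Finset.mem_range] at hp ⊢
    omega
  · rintro ⟨t, j⟩ hp
    simp only [Finset.mem_sigma, Finset.mem_range] at hp ⊢
    omega
  · rintro ⟨k, i⟩ hp
    simp
  · rintro ⟨t, j⟩ hp
    simp only [Finset.mem_sigma, Finset.mem_range] at hp
    have h : j + (t - j) = t := by omega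
    simp [h]
  · rintro ⟨k, i⟩ hp
    simp only [Finset.mem_sigma, Finset.mem_range] at hp
    have key : n.choose (k+i) * (k+i).choose k = n.choose k * (n-k).choose i := by
      have := Nat.choose_mul (n := n) (show k ≤ k + i by omega)
      simpa using this
    have keyR : ((n.choose (k+i)) * ((k+i).choose k) : ℝ) = (n.choose k) * ((n-k).choose i) := by
      exact_mod_cast congrArg (Nat.cast : ℕ → ℝ) key
    simp only []
    linear_combination (-(n.choose k : ℝ) * u ^ (k+i)) * keyR

theorem binomial_square_tsum_legendre (n : ℕ) (w : ℝ) (hw : |w| < 1) :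
    ∑' m : ℕ, ((n + m).choose m : ℝ) ^ 2 * w ^ m =
      (1 - w)⁻¹ ^ (n + 1) * (legendre n).eval ((1 + w) / (1 - w)) := by
  have legendre_eval : ∀ x : ℝ, (legendre n).eval x
      = ∑ t ∈ range (n+1), (n.choose t : ℝ) * ((n+t).choose t) * ((x-1)/2)^t := by
    intro x
    rw [legendre_eval1]
    simp only [show (x+1)/2 = (x-1)/2 + 1 from by ring]
    exact sumII n ((x-1)/2)
  have hwlt := abs_lt.mp hw
  have hpos : 0 < 1 - w := by linarith [hwlt.2]
  have hne : (1 : ℝ) - w ≠ 0 := ne_of_gt hpos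
  have hnorm : ‖w‖ < 1 := by rwa [Real.norm_eq_abs]
  have hx : ((1 + w) / (1 - w) - 1) / 2 = w / (1 - w) := by field_simp; ring
  rw [legendre_eval, hx]
  set g : ℕ → ℕ → ℝ := fun t m =>
    if t ≤ m then (n.choose t : ℝ) * ((n+t).choose t) * ((n+m).choose (n+t)) * w^m else 0 with hg
  -- summability of each g t
  have hcomp : ∀ t : ℕ, (fun i => g t (i + t)) =
      fun i => ((n.choose t : ℝ) * ((n+t).choose t) * w^t) * (((i + (n+t)).choose (n+t) : ℝ) * w^i) := by
    intro t
    funext i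
    have h1 : t ≤ i + t := Nat.le_add_left t i
    have h2 : n + (i + t) = i + (n + t) := by omega
    simp only [hg, if_pos h1, h2, pow_add]
    ring
  have hsummable : ∀ t : ℕ, Summable (g t) := by
    intro t
    have hinj : Function.Injective (fun i : ℕ => i + t) := fun a b h => by simpa using h
    refine (Function.Injective.summable_iff hinj ?_).mp ?_
    · intro m hm
      simp only [Set.mem_range, not_exists] at hm
      have : ¬ t ≤ m := by
        intro h
        exact hm (m - t) (show m - t + t = m by omega)
      simp [hg, this]
    · rw [show ((g t) ∘ (fun i : ℕ => i + t)) = fun i => g t (i + t) from rfl, hcomp]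
      exact ((summable_choose_mul_geometric_of_norm_lt_one (n+t) hnorm).mul_left _)
  -- tsum of each g t
  have htsum : ∀ t : ℕ, ∑' m, g t m =
      ((n.choose t : ℝ) * ((n+t).choose t)) * w^t * (1/(1-w)^(n+t+1)) := by
    intro t
    have hinj : Function.Injective (fun i : ℕ => i + t) := fun a b h => by simpa using h
    have hsupp : Function.support (g t) ⊆ Set.range (fun i : ℕ => i + t) := by
      intro m hm
      simp only [Function.mem_support, hg] at hm
      by_cases h : t ≤ m
      · exact ⟨m - t, show m - t + t = m by omega⟩
      · simp [h] at hm
    rw [← Function.Injective.tsum_eq hinj hsupp]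
    rw [show (fun i : ℕ => g t (i + t)) = _ from hcomp t]
    rw [tsum_mul_left, tsum_choose_mul_geometric_of_norm_lt_one (n+t) hnorm]
  -- rewrite RHS sum termwise
  have hterm : ∀ t ∈ range (n+1),
      (1 - w)⁻¹ ^ (n + 1) * ((n.choose t : ℝ) * ((n+t).choose t) * (w/(1-w))^t) = ∑' m, g t m := by
    intro t ht
    rw [htsum t, div_pow, show n+t+1 = (n+1)+t from by omega, pow_add]
    field_simp
    have hinv : (1 - w)⁻¹ ^ n * (1 - w) ^ n = 1 := by rw [← mul_pow, inv_mul_cancel₀ hne, one_pow]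
    linear_combination (w ^ t * (n.choose t : ℝ) * ((n + t).choose t) * (1 - w) ^ t - w * w ^ t * (n.choose t : ℝ) * ((n + t).choose t) * (1 - w) ^ t) * hinv
  rw [Finset.mul_sum, Finset.sum_congr rfl hterm, ← Summable.tsum_finsetSum (fun t _ => hsummable t)]
  refine (tsum_congr fun m => ?_).symm
  -- per-m identity
  have hnat : ∀ t, (if t ≤ m then n.choose t * ((n+t).choose t * (n+m).choose (n+t)) else 0)
      = (n+m).choose n * (n.choose t * m.choose t) := by
    intro t
    by_cases h : t ≤ m
    · rw [if_pos h]
      have h2 := Nat.choose_mul (n := n+m) (k := n+t) (show n ≤ n+t by omega)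
      simp only [Nat.add_sub_cancel_left] at h2
      have h1 : (n+t).choose t = (n+t).choose n := (Nat.choose_symm_add).symm
      rw [h1, mul_comm ((n+t).choose n), h2]
      ring
    · rw [if_neg h, Nat.choose_eq_zero_of_lt (by omega : m < t)]
      simp
  have hsum : ∑ t ∈ range (n+1), (if t ≤ m then n.choose t * ((n+t).choose t * (n+m).choose (n+t)) else 0)
      = ((n+m).choose m)^2 := by
    simp only [hnat]
    rw [← Finset.mul_sum]
    have hv : ∑ i ∈ range (n + 1), n.choose i * m.choose i = (n+m).choose n := by
      rw [Finset.sum_congr rfl fun i _ => Nat.mul_comm (n.choose i) (m.choose i), vand m n,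
        Nat.add_comm m n]
    rw [hv, Nat.choose_symm_add, sq]
  calc ∑ t ∈ range (n+1), g t m
      = ∑ t ∈ range (n+1), ((if t ≤ m then (n.choose t * ((n+t).choose t * (n+m).choose (n+t)) : ℕ) else 0 : ℕ) : ℝ) * w^m := by
        refine Finset.sum_congr rfl fun t ht => ?_
        by_cases h : t ≤ m
        · simp only [hg, if_pos h]
          push_cast
          ring
        · simp [hg, h]
    _ = (((n+m).choose m : ℝ))^2 * w^m := by
        rw [← Finset.sum_mul, ← Nat.cast_sum, hsum]
        push_cast
        ring
end

section
/- For 0 < a, b positive integers with k ≥ 1 and a, b > 0, the integral bound ∫_b^∞ e^{-sk} s^{a-1} ds ≤ ((b+1)^a (a+1)^{a+1} / min(b,1)) e^{-bk} holds. -/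
open MeasureTheory

private lemma aux_integral_exp_neg_mul_Ioi {c : ℝ} (hc : 0 < c) (b : ℝ) :
    ∫ x in Set.Ioi b, Real.exp (-c * x) = Real.exp (-c * b) / c := by
  have h := integral_Ioi_of_hasDerivAt_of_tendsto'
    (f := fun x => -Real.exp (-c * x) / c) (f' := fun x => Real.exp (-c * x)) (a := b)
    (fun x _ => by
      have : HasDerivAt (fun x : ℝ => -c * x) (-c) x := by
        simpa using (hasDerivAt_id x).const_mul (-c)
      have := (this.exp.const_mul (-1)).div_const c
      convert this using 1
      · ext y; ring
      · ext y; ring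
      show Real.exp (-c * x) = -1 * (Real.exp (-c * x) * -c) / c
      rw [show -1 * (Real.exp (-c * x) * -c) / c = Real.exp (-c * x) * (c / c) from by ring,
        div_self hc.ne', mul_one])
    (exp_neg_integrableOn_Ioi b hc)
    (by
      have : Filter.Tendsto (fun x : ℝ => Real.exp (-c * x)) Filter.atTop (nhds 0) := by
        simpa using Real.tendsto_exp_comp_nhds_zero.mpr
          (Filter.Tendsto.const_mul_atTop_of_neg (neg_neg_iff_pos.mpr hc) Filter.tendsto_id)
      simpa using (this.neg).div_const c)
  rw [h]
  field_simp
  ring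

private lemma aux_key (a b t : ℝ) (ha : 0 < a) (hb : 0 < b) (ht : 0 ≤ t) :
    (b + t) ^ (a - 1) ≤
      (b + 1) ^ a * (a + 1) ^ a / min b 1 * Real.exp (a * t / (a + 1)) := by
  have ha1 : (0:ℝ) < a + 1 := by linarith
  have hmin : (0:ℝ) < min b 1 := lt_min hb one_pos
  have hexp_nonneg : (0:ℝ) ≤ Real.exp (a * t / (a + 1)) := (Real.exp_pos _).le
  rcases le_or_gt 1 a with h1 | h1
  · -- case a ≥ 1
    have hA : (b + t) ^ (a - 1) ≤ ((b + 1) * (1 + t)) ^ (a - 1) :=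
      Real.rpow_le_rpow (by linarith) (by nlinarith) (by linarith)
    have hsplit : ((b + 1) * (1 + t)) ^ (a - 1)
        = (b + 1) ^ (a - 1) * (1 + t) ^ (a - 1) :=
      Real.mul_rpow (by linarith) (by linarith)
    have hB : (1 + t) ^ (a - 1) ≤ (1 + t) ^ a :=
      Real.rpow_le_rpow_of_exponent_le (by linarith) (by linarith)
    -- (1+t) ≤ (a+1) * exp (t/(a+1))
    have hbase : 1 + t ≤ (a + 1) * Real.exp (t / (a + 1)) := by
      have h := Real.add_one_le_exp (t / (a + 1))
      have h2 : (a + 1) * (t / (a + 1) + 1) ≤ (a + 1) * Real.exp (t / (a + 1)) :=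
        mul_le_mul_of_nonneg_left h ha1.le
      have h3 : (a + 1) * (t / (a + 1) + 1) = t + a + 1 := by field_simp; ring
      nlinarith
    have hC : (1 + t) ^ a ≤ (a + 1) ^ a * Real.exp (a * t / (a + 1)) := by
      have := Real.rpow_le_rpow (by linarith) hbase ha.le
      calc (1 + t) ^ a ≤ ((a + 1) * Real.exp (t / (a + 1))) ^ a := this
        _ = (a + 1) ^ a * Real.exp (t / (a + 1)) ^ a :=
            Real.mul_rpow ha1.le (Real.exp_pos _).le
        _ = (a + 1) ^ a * Real.exp (a * t / (a + 1)) := by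
            rw [← Real.exp_mul]; ring_nf
    have hD : (b + 1) ^ (a - 1) ≤ (b + 1) ^ a / min b 1 := by
      have heq : (b + 1) ^ (a - 1) = (b + 1) ^ a / (b + 1) := by
        rw [Real.rpow_sub (by linarith), Real.rpow_one]
      rw [heq]
      exact div_le_div_of_nonneg_left (Real.rpow_nonneg (by linarith) a) hmin
        (le_trans (min_le_right b 1) (by linarith))
    calc (b + t) ^ (a - 1) ≤ (b + 1) ^ (a - 1) * (1 + t) ^ (a - 1) := by
          rw [← hsplit]; exact hA
      _ ≤ (b + 1) ^ (a - 1) * ((a + 1) ^ a * Real.exp (a * t / (a + 1))) := by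
          apply mul_le_mul_of_nonneg_left _ (Real.rpow_nonneg (by linarith) _)
          exact hB.trans hC
      _ ≤ (b + 1) ^ a / min b 1 * ((a + 1) ^ a * Real.exp (a * t / (a + 1))) := by
          apply mul_le_mul_of_nonneg_right hD
          positivity
      _ = (b + 1) ^ a * (a + 1) ^ a / min b 1 * Real.exp (a * t / (a + 1)) := by
          ring
  · -- case a < 1
    have hA : (b + t) ^ (a - 1) ≤ b ^ (a - 1) :=
      Real.rpow_le_rpow_of_nonpos hb (by linarith) (by linarith)
    have hB : b ^ (a - 1) ≤ (b + 1) ^ a / min b 1 := by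
      rcases le_or_gt b 1 with hb1 | hb1
      · rw [min_eq_left hb1]
        have heq : b ^ (a - 1) = b ^ a / b := by
          rw [Real.rpow_sub hb, Real.rpow_one]
        rw [heq]
        gcongr <;> linarith
      · rw [min_eq_right hb1.le]
        have h1' : b ^ (a - 1) ≤ 1 :=
          Real.rpow_le_one_of_one_le_of_nonpos hb1.le (by linarith)
        have h2' : (1:ℝ) ≤ (b + 1) ^ a :=
          Real.one_le_rpow (by linarith) ha.le
        calc b ^ (a - 1) ≤ 1 := h1'
          _ ≤ (b + 1) ^ a := h2'
          _ = (b + 1) ^ a / 1 := by ring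
    have hC : (1:ℝ) ≤ (a + 1) ^ a := Real.one_le_rpow (by linarith) ha.le
    calc (b + t) ^ (a - 1) ≤ (b + 1) ^ a / min b 1 := hA.trans hB
      _ = (b + 1) ^ a / min b 1 * 1 := by ring
      _ ≤ (b + 1) ^ a * (a + 1) ^ a / min b 1 * Real.exp (a * t / (a + 1)) := by
          have h1'' : (1:ℝ) ≤ Real.exp (a * t / (a + 1)) := by
            rw [Real.one_le_exp_iff]; positivity
          have hd : (b + 1) ^ a / min b 1 ≤ (b + 1) ^ a * (a + 1) ^ a / min b 1 := by
            gcongr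
            nlinarith [Real.rpow_nonneg (show (0:ℝ) ≤ b + 1 by linarith) a,
              Real.one_le_rpow (show (1:ℝ) ≤ a + 1 by linarith) ha.le]
          exact mul_le_mul hd h1'' zero_le_one (by positivity)

theorem incompleteGamma_tail_bound (a b k : ℝ) (ha : 0 < a) (hb : 0 < b) (hk : 1 ≤ k) :
    ∫ s in Set.Ioi b, Real.exp (-s * k) * s ^ (a - 1) ≤
      (b + 1) ^ a * (a + 1) ^ (a + 1) / min b 1 * Real.exp (-b * k) := by
  have ha1 : (0:ℝ) < a + 1 := by linarith
  have hmin : (0:ℝ) < min b 1 := lt_min hb one_pos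
  set c : ℝ := (a + 1)⁻¹ with hc_def
  have hc : 0 < c := inv_pos.mpr ha1
  set M : ℝ := (b + 1) ^ a * (a + 1) ^ a / min b 1 with hM_def
  have hM : 0 ≤ M := by positivity
  set D : ℝ := M * Real.exp (-b * k) with hD_def
  have hD : 0 ≤ D := mul_nonneg hM (Real.exp_pos _).le
  -- the dominating function
  set g : ℝ → ℝ := fun s => (D * Real.exp (b * c)) * Real.exp (-c * s) with hg_def
  have hg_int : IntegrableOn g (Set.Ioi b) :=
    (exp_neg_integrableOn_Ioi b hc).const_mul _
  have hf_nonneg : 0 ≤ᵐ[volume.restrict (Set.Ioi b)]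
      fun s => Real.exp (-s * k) * s ^ (a - 1) := by
    filter_upwards [ae_restrict_mem measurableSet_Ioi] with s hs
    have hs0 : (0:ℝ) ≤ s := le_of_lt (hb.trans hs)
    positivity
  have hfg : (fun s => Real.exp (-s * k) * s ^ (a - 1)) ≤ᵐ[volume.restrict (Set.Ioi b)] g := by
    filter_upwards [ae_restrict_mem measurableSet_Ioi] with s hs
    have hsb : b < s := hs
    have ht : 0 ≤ s - b := by linarith
    have hkey := aux_key a b (s - b) ha hb ht
    have hs_eq : s = b + (s - b) := by ring
    have h1 : Real.exp (-s * k) ≤ Real.exp (-b * k) * Real.exp (-(s - b)) := by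
      rw [← Real.exp_add, Real.exp_le_exp]
      nlinarith
    have h2 : Real.exp (-s * k) * s ^ (a - 1)
        ≤ Real.exp (-b * k) * Real.exp (-(s - b)) * (b + (s - b)) ^ (a - 1) := by
      rw [← hs_eq]
      exact mul_le_mul_of_nonneg_right h1 (Real.rpow_nonneg (by linarith) _)
    refine h2.trans ?_
    have h3 : Real.exp (-b * k) * Real.exp (-(s - b)) * (b + (s - b)) ^ (a - 1)
        ≤ Real.exp (-b * k) * Real.exp (-(s - b)) *
          (M * Real.exp (a * (s - b) / (a + 1))) := by
      apply mul_le_mul_of_nonneg_left hkey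
      positivity
    refine h3.trans ?_
    have hexp_eq : Real.exp (-(s - b)) * Real.exp (a * (s - b) / (a + 1))
        = Real.exp (b * c) * Real.exp (-c * s) := by
      rw [← Real.exp_add, ← Real.exp_add, Real.exp_eq_exp]
      rw [hc_def]
      field_simp
      ring
    have hgs : g s = D * Real.exp (b * c) * Real.exp (-c * s) := rfl
    refine le_of_eq ?_
    rw [hgs, hD_def,
      show Real.exp (-b * k) * Real.exp (-(s - b)) * (M * Real.exp (a * (s - b) / (a + 1)))
        = M * Real.exp (-b * k) * (Real.exp (-(s - b)) * Real.exp (a * (s - b) / (a + 1)))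
        from by ring, hexp_eq]
    ring
  have hmono := integral_mono_of_nonneg hf_nonneg hg_int hfg
  have hval : ∫ s in Set.Ioi b, g s = D * (a + 1) := by
    simp only [hg_def]
    rw [integral_const_mul, aux_integral_exp_neg_mul_Ioi hc b]
    have h1 : Real.exp (b * c) * Real.exp (-c * b) = 1 := by
      rw [← Real.exp_add]; ring_nf; exact Real.exp_zero
    have h2 : c⁻¹ = a + 1 := by rw [hc_def, inv_inv]
    have h3 : (a + 1) * c = 1 := by rw [hc_def]; field_simp
    field_simp [hc.ne']
    calc D * Real.exp (b * c) * Real.exp (-(b * c))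
        = D * (Real.exp (b * c) * Real.exp (-c * b)) := by rw [neg_mul, mul_comm c b]; ring
      _ = D := by rw [h1]; ring
      _ = D * ((a + 1) * c) := by rw [h3]; ring
      _ = D * c * (a + 1) := by ring
  rw [hval] at hmono
  refine hmono.trans_eq ?_
  rw [hD_def, hM_def]
  have : (a + 1) ^ (a + 1) = (a + 1) ^ a * (a + 1) := by
    rw [Real.rpow_add ha1, Real.rpow_one]
  rw [this]
  ring
end

section
/- If 0 ≤ q ≤ 1/2, d ≥ 2, and n ≥ 1, then (e^{-q} d + 1)^{2n} ≤ (d+1)^{2n} e^{-q n d/(d+1)}. -/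
theorem exp_weighted_bound (q : ℝ) (hq0 : 0 ≤ q) (hq : q ≤ 1 / 2) (d n : ℕ)
    (hd : 2 ≤ d) (hn : 1 ≤ n) :
    (Real.exp (-q) * d + 1) ^ (2 * n) ≤
      ((d : ℝ) + 1) ^ (2 * n) * Real.exp (-q * n * d / (d + 1)) := by
  have hd0 : (0:ℝ) < d := by positivity
  have hd1 : (0:ℝ) < (d:ℝ) + 1 := by positivity
  set t : ℝ := q * d / (2 * ((d:ℝ) + 1)) with ht
  have ht0 : 0 ≤ t := by positivity
  -- e^{-q} ≤ 1 - q/2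
  have h1 : Real.exp (-q) ≤ 1 - q / 2 := by
    have hq1 : q ≤ 1 := by linarith
    have h2 : q + 1 ≤ Real.exp q := Real.add_one_le_exp q
    have h3 : Real.exp (-q) = 1 / Real.exp q := by
      rw [Real.exp_neg]; ring
    rw [h3]
    rw [div_le_iff₀ (Real.exp_pos q)]
    have : (1 - q / 2) * (1 + q) ≥ 1 := by nlinarith
    nlinarith [Real.exp_pos q]
  -- base inequality
  have hbase : Real.exp (-q) * d + 1 ≤ ((d:ℝ) + 1) * Real.exp (-t) := by
    have h4 : Real.exp (-q) * d + 1 ≤ ((d:ℝ) + 1) * (1 - t) := by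
      have : ((d:ℝ) + 1) * (1 - t) = (d:ℝ) + 1 - q * d / 2 := by
        rw [ht]; field_simp
      rw [this]
      nlinarith
    have h5 : 1 - t ≤ Real.exp (-t) := by
      have := Real.add_one_le_exp (-t); linarith
    calc Real.exp (-q) * d + 1 ≤ ((d:ℝ) + 1) * (1 - t) := h4
      _ ≤ ((d:ℝ) + 1) * Real.exp (-t) := by
          exact mul_le_mul_of_nonneg_left h5 (le_of_lt hd1)
  have hL0 : 0 ≤ Real.exp (-q) * d + 1 := by positivity
  have hpow : (Real.exp (-q) * d + 1) ^ (2 * n) ≤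
      (((d:ℝ) + 1) * Real.exp (-t)) ^ (2 * n) :=
    pow_le_pow_left₀ hL0 hbase _
  calc (Real.exp (-q) * d + 1) ^ (2 * n)
      ≤ (((d:ℝ) + 1) * Real.exp (-t)) ^ (2 * n) := hpow
    _ = ((d:ℝ) + 1) ^ (2 * n) * Real.exp (-t) ^ (2 * n) := mul_pow _ _ _
    _ = ((d:ℝ) + 1) ^ (2 * n) * Real.exp (-q * n * d / (d + 1)) := by
        rw [← Real.exp_nat_mul]
        congr 1
        have hne : ((d:ℝ) + 1) ≠ 0 := ne_of_gt hd1
        rw [ht, mul_comm (2:ℝ), ← div_div]; congr 1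
        push_cast
        ring
end

section
/- Let G(x) = sum_{n≥0} a_n x^n be a formal power series with integer coefficients, a_0 = 1, satisfying the Lucas property (a_{np+q} ≡ a_n a_q mod p for all large primes p, n ≥ 0, 0 ≤ q ≤ p-1). If G'/G is algebraic over Q(x), then G'/G is a rational function over Q. In particular, for each large prime p, G(x) ≡ G(x)^p · G_p(x) (mod p) where G_p(x) = sum_{n ≤ p-1} a_n x^n, and hence G'/G ≡ G_p'/G_p (mod p). -/
open PowerSeries

/-- The formal derivative of a power series over `ℚ`. -/
noncomputable def psDeriv (f : PowerSeries ℚ) : PowerSeries ℚ :=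
  PowerSeries.mk fun n => ((n : ℚ) + 1) * PowerSeries.coeff (n + 1) f

lemma coeff_mul_eq_zero_of_low {R : Type*} [CommSemiring R] (E h : PowerSeries R) (m : ℕ)
    (hE : ∀ j, j ≤ m → coeff j E = 0) : coeff m (E * h) = 0 := by
  rw [PowerSeries.coeff_mul]
  refine Finset.sum_eq_zero fun p hp => ?_
  rw [Finset.HasAntidiagonal.mem_antidiagonal] at hp
  rw [hE p.1 (by omega), zero_mul]

lemma ps_pow_char {p : ℕ} [hp : Fact p.Prime] (g : PowerSeries (ZMod p)) (m : ℕ) :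
    PowerSeries.coeff m (g ^ p) =
      if p ∣ m then PowerSeries.coeff (m / p) g else 0 := by
  classical
  have hp1 : 0 < p := hp.out.pos
  set T : Polynomial (ZMod p) := trunc (m+1) g with hT
  set E : PowerSeries (ZMod p) := g - (T : PowerSeries (ZMod p)) with hEdef
  have hE : ∀ j, j ≤ m → coeff j E = 0 := by
    intro j hj
    simp [hEdef, hT, Polynomial.coeff_coe, PowerSeries.coeff_trunc, Nat.lt_succ_of_le hj]
  have hg : g = (T : PowerSeries (ZMod p)) + E := by ring
  have key : coeff m (g ^ p) = coeff m ((T : PowerSeries (ZMod p)) ^ p) := by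
    conv_lhs => rw [hg, add_pow]
    rw [map_sum, Finset.sum_range_succ]
    have h0 : ∀ i ∈ Finset.range p,
        coeff m ((T : PowerSeries (ZMod p)) ^ i * E ^ (p - i) *
          (p.choose i : PowerSeries (ZMod p))) = 0 := by
      intro i hi
      rw [Finset.mem_range] at hi
      have hsplit : E ^ (p - i) = E * E ^ (p - i - 1) := by
        rw [← pow_succ']
        congr 1
        omega
      have : (T : PowerSeries (ZMod p)) ^ i * E ^ (p - i) * (p.choose i : PowerSeries (ZMod p))
          = E * ((T : PowerSeries (ZMod p)) ^ i * E ^ (p - i - 1) *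
            (p.choose i : PowerSeries (ZMod p))) := by
        rw [hsplit]; ring
      rw [this]
      exact coeff_mul_eq_zero_of_low _ _ _ hE
    rw [Finset.sum_eq_zero h0, zero_add, Nat.sub_self, pow_zero, mul_one, Nat.choose_self,
      Nat.cast_one, mul_one]
  -- now T^p
  have hTp : (T ^ p).coeff m = if p ∣ m then T.coeff (m / p) else 0 := by
    have h1 : Polynomial.map (frobenius (ZMod p) p) (Polynomial.expand (ZMod p) p T) = T ^ p :=
      Polynomial.map_frobenius_expand p T
    rw [ZMod.frobenius_zmod, Polynomial.map_id] at h1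
    rw [← h1, Polynomial.coeff_expand hp1]
  rw [key, ← Polynomial.coe_pow, Polynomial.coeff_coe, hTp]
  split_ifs with h
  · rw [hT, PowerSeries.coeff_trunc, if_pos (Nat.lt_succ_of_le (Nat.div_le_self m p))]
  · rfl


lemma lucas_mod (a : ℕ → ℤ) {p : ℕ} (hp : p.Prime)
    (hL : ∀ n q : ℕ, q ≤ p - 1 → (p : ℤ) ∣ a (n * p + q) - a n * a q) :
    (PowerSeries.mk fun n => (a n : ZMod p)) =
      (PowerSeries.mk fun n => (a n : ZMod p)) ^ p *
        PowerSeries.mk (fun n => if n ≤ p - 1 then (a n : ZMod p) else 0) := by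
  classical
  haveI : Fact p.Prime := ⟨hp⟩
  have hp1 : 0 < p := hp.pos
  ext m
  rw [PowerSeries.coeff_mul]
  have hmodle : m % p ≤ p - 1 := Nat.le_sub_one_of_lt (Nat.mod_lt m hp1)
  have hmem : (p * (m / p), m % p) ∈ Finset.HasAntidiagonal.antidiagonal m := by
    rw [Finset.HasAntidiagonal.mem_antidiagonal]
    exact Nat.div_add_mod m p
  rw [Finset.sum_eq_single_of_mem _ hmem]
  · dsimp only
    rw [ps_pow_char, if_pos (Dvd.intro _ rfl)]
    simp only [coeff_mk]
    rw [Nat.mul_div_cancel_left _ hp1, if_pos hmodle]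
    have hdm := hL (m / p) (m % p) hmodle
    rw [Nat.div_add_mod' m p] at hdm
    have h2 : ((a m - a (m / p) * a (m % p) : ℤ) : ZMod p) = 0 := by
      rwa [ZMod.intCast_zmod_eq_zero_iff_dvd]
    push_cast at h2
    linear_combination h2
  · intro b hb hne
    rw [Finset.HasAntidiagonal.mem_antidiagonal] at hb
    rw [coeff_mk, ps_pow_char]
    by_cases hdvd : p ∣ b.1
    · rw [if_pos hdvd, coeff_mk]
      by_cases hb2 : b.2 ≤ p - 1
      · exfalso
        obtain ⟨t, ht⟩ := hdvd
        apply hne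
        have hd := Nat.div_add_mod m p
        have hlt : m % p < p := Nat.mod_lt m hp1
        have hb2' : b.2 < p := by omega
        have htdiv : m / p = t := by
          have : m = p * t + b.2 := by omega
          rw [this, Nat.mul_add_div hp1, Nat.div_eq_of_lt hb2', Nat.add_zero]
        have hb1 : b.1 = p * (m / p) := by rw [ht, ← htdiv]
        have : b.2 = m % p := by omega
        exact Prod.ext hb1 this
      · rw [if_neg hb2, mul_zero]
    · rw [if_neg hdvd, zero_mul]


lemma gp_mul_F {p : ℕ} [hfp : Fact p.Prime] (a f : ℕ → ℤ) (h0 : a 0 = 1)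
    (hGF : (PowerSeries.mk fun n => (a n : ZMod p)) * (PowerSeries.mk fun n => (f n : ZMod p)) =
      d⁄dX (ZMod p) (PowerSeries.mk fun n => (a n : ZMod p)))
    (hGp : (PowerSeries.mk fun n => (a n : ZMod p)) =
      (PowerSeries.mk fun n => (a n : ZMod p)) ^ p *
        PowerSeries.mk (fun n => if n ≤ p - 1 then (a n : ZMod p) else 0)) :
    ((trunc p (PowerSeries.mk fun n => (a n : ZMod p)) : Polynomial (ZMod p)) :
        PowerSeries (ZMod p)) * (PowerSeries.mk fun n => (f n : ZMod p)) =
      ((Polynomial.derivative (trunc p (PowerSeries.mk fun n => (a n : ZMod p))) :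
        Polynomial (ZMod p)) : PowerSeries (ZMod p)) := by
  classical
  set G : PowerSeries (ZMod p) := PowerSeries.mk fun n => (a n : ZMod p) with hGdef
  set F : PowerSeries (ZMod p) := PowerSeries.mk fun n => (f n : ZMod p) with hFdef
  set C : Polynomial (ZMod p) := trunc p G with hCdef
  have hp1 : 0 < p := hfp.out.pos
  have hcoe : (C : PowerSeries (ZMod p)) =
      PowerSeries.mk (fun n => if n ≤ p - 1 then (a n : ZMod p) else 0) := by
    ext n
    rw [Polynomial.coeff_coe, hCdef, PowerSeries.coeff_trunc]
    simp only [PowerSeries.coeff_mk]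
    by_cases h : n < p
    · rw [if_pos h, if_pos (by omega)]
      rw [hGdef, PowerSeries.coeff_mk]
    · rw [if_neg h, if_neg (by omega)]
  have hGp' : G = G ^ p * (C : PowerSeries (ZMod p)) := by rw [hcoe]; exact hGp
  have hpz : (p : PowerSeries (ZMod p)) = 0 := by
    rw [← map_natCast (PowerSeries.C) p, ZMod.natCast_self, map_zero]
  have hdpow : d⁄dX (ZMod p) (G ^ p) = 0 := by
    rw [Derivation.leibniz_pow]
    rw [nsmul_eq_mul, hpz, zero_mul]
  have hdG : d⁄dX (ZMod p) G = G ^ p * d⁄dX (ZMod p) (C : PowerSeries (ZMod p)) := by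
    conv_lhs => rw [hGp']
    rw [Derivation.leibniz, hdpow, smul_zero, add_zero, smul_eq_mul]
  have hGne : G ≠ 0 := by
    intro h
    have : PowerSeries.constantCoeff G = 1 := by
      rw [hGdef]
      simp [h0]
    rw [h, map_zero] at this
    exact one_ne_zero this.symm
  have key : G * ((C : PowerSeries (ZMod p)) * F) =
      G * (d⁄dX (ZMod p) (C : PowerSeries (ZMod p))) := by
    calc G * ((C : PowerSeries (ZMod p)) * F)
        = (C : PowerSeries (ZMod p)) * (G * F) := by ring
      _ = (C : PowerSeries (ZMod p)) * d⁄dX (ZMod p) G := by rw [hGF]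
      _ = (C : PowerSeries (ZMod p)) *
          (G ^ p * d⁄dX (ZMod p) (C : PowerSeries (ZMod p))) := by rw [hdG]
      _ = (G ^ p * (C : PowerSeries (ZMod p))) *
          d⁄dX (ZMod p) (C : PowerSeries (ZMod p)) := by ring
      _ = G * d⁄dX (ZMod p) (C : PowerSeries (ZMod p)) := by rw [← hGp']
  have := mul_left_cancel₀ hGne key
  rw [this, PowerSeries.derivative_coe]


lemma rational_small_degree {F : Type*} [Field F] (Fps : PowerSeries F) (Cp : Polynomial F)
    (hC : Cp ≠ 0)
    (hCF : (Cp : PowerSeries F) * Fps = ((Polynomial.derivative Cp : Polynomial F) : PowerSeries F))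
    (K : ℕ) (hK : 1 ≤ K) (T : ℕ → Polynomial F) (hT0 : T 0 ≠ 0) (hTK : T K ≠ 0)
    (hrel : ∑ i ∈ Finset.range (K + 1), ((T i : PowerSeries F) * Fps ^ i) = 0) :
    ∃ u v : Polynomial F, v ≠ 0 ∧ v.natDegree ≤ (T K).natDegree ∧
      u.natDegree ≤ (T 0).natDegree ∧ (v : PowerSeries F) * Fps = (u : PowerSeries F) := by
  classical
  set C' : Polynomial F := Polynomial.derivative Cp with hC'def
  set g : Polynomial F := GCDMonoid.gcd C' Cp with hgdef
  have hgC : g * (Cp / g) = Cp := EuclideanDomain.mul_div_cancel'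
    (gcd_ne_zero_of_right hC) (gcd_dvd_right _ _)
  have hgC' : g * (C' / g) = C' := EuclideanDomain.mul_div_cancel'
    (gcd_ne_zero_of_right hC) (gcd_dvd_left _ _)
  set v : Polynomial F := Cp / g with hvdef
  set u : Polynomial F := C' / g with hudef
  have hg0 : g ≠ 0 := gcd_ne_zero_of_right hC
  have hv0 : v ≠ 0 := right_div_gcd_ne_zero hC
  have hcop : IsCoprime v u := (isCoprime_div_gcd_div_gcd hC).symm
  -- power series relation: v * Fps = u
  have hvF : (v : PowerSeries F) * Fps = (u : PowerSeries F) := by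
    have h1 : ((g : Polynomial F) : PowerSeries F) * ((v : PowerSeries F) * Fps) =
        ((g : Polynomial F) : PowerSeries F) * (u : PowerSeries F) := by
      calc ((g : Polynomial F) : PowerSeries F) * ((v : PowerSeries F) * Fps)
          = (((g * v : Polynomial F)) : PowerSeries F) * Fps := by
            rw [Polynomial.coe_mul]; ring
        _ = (Cp : PowerSeries F) * Fps := by rw [hgC]
        _ = (C' : PowerSeries F) := hCF
        _ = (((g * u : Polynomial F)) : PowerSeries F) := by rw [hgC']
        _ = ((g : Polynomial F) : PowerSeries F) * (u : PowerSeries F) := by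
            rw [Polynomial.coe_mul]
    exact mul_left_cancel₀ (by rwa [ne_eq, Polynomial.coe_eq_zero_iff]) h1
  -- polynomial relation
  have hpoly : ∑ i ∈ Finset.range (K + 1), T i * u ^ i * v ^ (K - i) = 0 := by
    have hps : ∑ i ∈ Finset.range (K + 1),
        ((T i * u ^ i * v ^ (K - i) : Polynomial F) : PowerSeries F) = 0 := by
      have h2 : (∑ i ∈ Finset.range (K + 1), ((T i : PowerSeries F) * Fps ^ i)) *
          ((v : PowerSeries F) ^ K) = 0 := by rw [hrel, zero_mul]
      rw [Finset.sum_mul] at h2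
      rw [← h2]
      refine Finset.sum_congr rfl fun i hi => ?_
      rw [Finset.mem_range] at hi
      have hiK : i ≤ K := by omega
      have : (v : PowerSeries F) ^ K =
          (v : PowerSeries F) ^ i * (v : PowerSeries F) ^ (K - i) := by
        rw [← pow_add]; congr 1; omega
      rw [this]
      calc ((T i * u ^ i * v ^ (K - i) : Polynomial F) : PowerSeries F)
          = (T i : PowerSeries F) * (u : PowerSeries F) ^ i * (v : PowerSeries F) ^ (K - i) := by
            push_cast; ring
        _ = (T i : PowerSeries F) * ((v : PowerSeries F) * Fps) ^ i *
              (v : PowerSeries F) ^ (K - i) := by rw [hvF]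
        _ = (T i : PowerSeries F) * Fps ^ i *
              ((v : PowerSeries F) ^ i * (v : PowerSeries F) ^ (K - i)) := by ring
    have : ((∑ i ∈ Finset.range (K + 1), T i * u ^ i * v ^ (K - i) : Polynomial F) :
        PowerSeries F) = 0 := by
      rw [← Polynomial.coeToPowerSeries.ringHom_apply, map_sum, ← hps]
      refine Finset.sum_congr rfl fun i _ => ?_
      rw [Polynomial.coeToPowerSeries.ringHom_apply]
    rwa [Polynomial.coe_eq_zero_iff] at this
  -- v ∣ T K
  have hvdvd : v ∣ T K := by
    have hsplit := Finset.sum_range_succ (fun i => T i * u ^ i * v ^ (K - i)) K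
    rw [hpoly, Nat.sub_self, pow_zero, mul_one] at hsplit
    have hTKu : T K * u ^ K = -∑ i ∈ Finset.range K, T i * u ^ i * v ^ (K - i) := by
      linear_combination -hsplit
    have hdvd : v ∣ T K * u ^ K := by
      rw [hTKu]
      refine dvd_neg.mpr (Finset.dvd_sum fun i hi => ?_)
      rw [Finset.mem_range] at hi
      exact Dvd.dvd.mul_left (dvd_pow_self v (by omega : K - i ≠ 0)) _
    exact (hcop.pow_right (n := K)).dvd_of_dvd_mul_right hdvd
  -- u ∣ T 0
  have hudvd : u ∣ T 0 := by
    have hsplit := Finset.sum_range_succ' (fun i => T i * u ^ i * v ^ (K - i)) K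
    rw [hpoly, pow_zero, Nat.sub_zero] at hsplit
    have hT0v : T 0 * v ^ K = -∑ i ∈ Finset.range K, T (i + 1) * u ^ (i + 1) * v ^ (K - (i + 1)) := by
      linear_combination -hsplit
    have hdvd : u ∣ T 0 * v ^ K := by
      rw [hT0v]
      refine dvd_neg.mpr (Finset.dvd_sum fun i hi => ?_)
      have : u ∣ u ^ (i + 1) := dvd_pow_self u (by omega)
      exact (this.mul_left _).mul_right _
    exact (hcop.symm.pow_right (n := K)).dvd_of_dvd_mul_right hdvd
  exact ⟨u, v, hv0, Polynomial.natDegree_le_of_dvd hvdvd hTK,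
    Polynomial.natDegree_le_of_dvd hudvd hT0, hvF⟩


lemma poly_clear (P : Polynomial ℚ) (c : ℤ) (hc : ∀ n, ((P.coeff n).den : ℤ) ∣ c) :
    ∃ S : Polynomial ℤ, S.map (Int.castRingHom ℚ) = Polynomial.C (c : ℚ) * P := by
  classical
  refine ⟨∑ n ∈ P.support, Polynomial.C (c / ((P.coeff n).den : ℤ) * (P.coeff n).num) *
    Polynomial.X ^ n, ?_⟩
  ext n
  rw [Polynomial.coeff_map, Polynomial.coeff_C_mul]
  rw [Polynomial.finset_sum_coeff]
  simp only [Polynomial.coeff_C_mul, Polynomial.coeff_X_pow]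
  rw [Finset.sum_eq_single n]
  · by_cases hn : n ∈ P.support
    · rw [if_pos rfl, mul_one]
      obtain ⟨t, ht⟩ := hc n
      have hden : ((P.coeff n).den : ℤ) ≠ 0 := by positivity
      have hdenq : ((P.coeff n).den : ℚ) ≠ 0 := by positivity
      have hdiv : c / ((P.coeff n).den : ℤ) = t := by rw [ht, Int.mul_ediv_cancel_left _ hden]
      rw [hdiv]
      have hnum : ((P.coeff n).num : ℚ) = P.coeff n * ((P.coeff n).den : ℚ) :=
        (div_eq_iff hdenq).mp (Rat.num_div_den (P.coeff n))
      have htq : (c : ℚ) = ((P.coeff n).den : ℚ) * (t : ℚ) := by exact_mod_cast ht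
      simp only [eq_intCast]
      push_cast
      rw [hnum, htq]
      ring
    · rw [Polynomial.notMem_support_iff] at hn
      simp [hn]
  · intro b _ hbn
    simp [Ne.symm hbn]
  · intro hn
    rw [Polynomial.notMem_support_iff] at hn
    simp [hn]

lemma int_eq_zero_of_prime_dvd (D : ℤ) (N : ℕ)
    (h : ∀ p : ℕ, N ≤ p → p.Prime → (p : ℤ) ∣ D) : D = 0 := by
  by_contra hD
  obtain ⟨p, hpge, hp⟩ := Nat.exists_infinite_primes (max N (D.natAbs + 1))
  have hdvd := h p (le_trans (le_max_left _ _) hpge) hp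
  have hle := Int.le_of_dvd (abs_pos.mpr hD) ((dvd_abs _ _).mpr hdvd)
  rw [Int.abs_eq_natAbs] at hle
  have h3 : D.natAbs + 1 ≤ p := le_trans (le_max_right _ _) hpge
  omega


lemma det_zero_of_modp (f : ℕ → ℤ) (r m0 N : ℕ)
    (h : ∀ p : ℕ, N ≤ p → p.Prime → ∃ w : Fin (r+1) → ZMod p, w ≠ 0 ∧
      ∀ s : ℕ, m0 ≤ s → ∑ j : Fin (r+1), (f (s + j) : ZMod p) * w j = 0)
    (s : Fin (r+1) → ℕ) (hs : ∀ i, m0 ≤ s i) :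
    (Matrix.of fun i j : Fin (r+1) => f (s i + j)).det = 0 := by
  classical
  apply int_eq_zero_of_prime_dvd _ N
  intro p hpN hp
  haveI : Fact p.Prime := ⟨hp⟩
  obtain ⟨w, hw0, hw⟩ := h p hpN hp
  rw [← ZMod.intCast_zmod_eq_zero_iff_dvd]
  have hdet2 := RingHom.map_det (Int.castRingHom (ZMod p))
    (Matrix.of fun i j : Fin (r+1) => f (s i + j))
  rw [RingHom.mapMatrix_apply, eq_intCast] at hdet2
  rw [hdet2]
  have hmap : (Matrix.of fun i j : Fin (r+1) => f (s i + j)).map (Int.castRingHom (ZMod p)) =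
      Matrix.of fun i j : Fin (r+1) => (f (s i + j) : ZMod p) := by
    ext i j
    simp [Matrix.map_apply]
  rw [hmap]
  rw [← Matrix.exists_mulVec_eq_zero_iff]
  refine ⟨w, hw0, ?_⟩
  funext i
  rw [Matrix.mulVec]
  show ∑ j : Fin (r+1), _ = _
  · exact hw (s i) (hs i)

lemma exists_annihilator (f : ℕ → ℤ) (r m0 : ℕ)
    (hdet : ∀ s : Fin (r+1) → ℕ, (∀ i, m0 ≤ s i) →
      (Matrix.of fun i j : Fin (r+1) => f (s i + j)).det = 0) :
    ∃ c : Fin (r+1) → ℚ, c ≠ 0 ∧ ∀ s : ℕ, m0 ≤ s →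
      ∑ j : Fin (r+1), c j * (f (s + j) : ℚ) = 0 := by
  classical
  set R : ℕ → (Fin (r+1) → ℚ) := fun s j => (f (m0 + s + j) : ℚ) with hR
  set W : Submodule ℚ (Fin (r+1) → ℚ) := Submodule.span ℚ (Set.range R) with hW
  have hWne : W ≠ ⊤ := by
    intro htop
    obtain ⟨b, hbsub, hbspan, hbind⟩ := exists_linearIndependent ℚ (Set.range R)
    rw [← hW, htop] at hbspan
    have hbfin : b.Finite := by
      have := hbind.setFinite
      exact this
    haveI : Fintype b := hbfin.fintype
    have hbasis : Module.Basis b ℚ (Fin (r+1) → ℚ) := Module.Basis.mk hbind (by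
      rw [Subtype.range_coe, hbspan])
    have hcard : Fintype.card b = r + 1 := by
      have h1 := Module.finrank_eq_card_basis hbasis
      rw [Module.finrank_fintype_fun_eq_card, Fintype.card_fin] at h1
      omega
    have e : Fin (r+1) ≃ b := (Fintype.equivFinOfCardEq hcard).symm
    have ht : ∀ i : Fin (r+1), ∃ t : ℕ, R t = ((e i : b) : Fin (r+1) → ℚ) := by
      intro i
      obtain ⟨t, htt⟩ := hbsub (e i).2
      exact ⟨t, htt⟩
    choose t htR using ht
    set M : Matrix (Fin (r+1)) (Fin (r+1)) ℚ :=
      Matrix.of fun i j => (f (m0 + t i + j) : ℚ) with hM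
    have hdetM : M.det = 0 := by
      have hz := hdet (fun i => m0 + t i) (fun i => Nat.le_add_right _ _)
      have hdet2 := RingHom.map_det (Int.castRingHom ℚ)
        (Matrix.of fun i j : Fin (r+1) => f ((m0 + t i) + j))
      rw [RingHom.mapMatrix_apply, eq_intCast, hz, Int.cast_zero] at hdet2
      have hMeq : M = (Matrix.of fun i j : Fin (r+1) => f ((m0 + t i) + j)).map
          (Int.castRingHom ℚ) := by
        ext i j
        simp [hM, Matrix.map_apply]
      rw [hMeq, ← hdet2]
    obtain ⟨g, hg0, hgv⟩ := Matrix.exists_vecMul_eq_zero_iff.mpr hdetM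
    have hind2 : LinearIndependent ℚ (fun i : Fin (r+1) => ((e i : b) : Fin (r+1) → ℚ)) :=
      hbind.comp e (Equiv.injective e)
    have hsum : ∑ i : Fin (r+1), g i • ((e i : b) : Fin (r+1) → ℚ) = 0 := by
      funext j
      have h1 : ∀ i, ((e i : b) : Fin (r+1) → ℚ) j = M i j := by
        intro i
        rw [← htR i]
        simp [hM, hR]
      rw [Finset.sum_apply]
      simp only [Pi.smul_apply, smul_eq_mul, h1]
      have h2 := congrFun hgv j
      simpa [Matrix.vecMul, dotProduct] using h2
    have := (Fintype.linearIndependent_iff.mp hind2) g hsum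
    exact hg0 (funext this)
  obtain ⟨φ, hφ0, hφmap⟩ := Submodule.exists_dual_map_eq_bot_of_lt_top
    (lt_top_iff_ne_top.mpr hWne) inferInstance
  set u : Fin (r+1) → (Fin (r+1) → ℚ) := fun i j => if i = j then 1 else 0 with hu
  refine ⟨fun i => φ (u i), ?_, ?_⟩
  · intro hc
    apply hφ0
    refine LinearMap.ext fun x => ?_
    rw [pi_eq_sum_univ x, map_sum]
    simp only [map_smul]
    have : ∀ i, φ (u i) = 0 := fun i => congrFun hc i
    simp
    exact Finset.sum_eq_zero fun i _ => by rw [show φ (fun j => if i = j then (1:ℚ) else 0) = 0 from this i, mul_zero]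
  · intro s hs
    have hmem : R (s - m0) ∈ W := Submodule.subset_span ⟨s - m0, rfl⟩
    have hφR : φ (R (s - m0)) = 0 := by
      have : φ (R (s - m0)) ∈ Submodule.map φ W := ⟨_, hmem, rfl⟩
      rw [hφmap] at this
      exact (Submodule.mem_bot ℚ).mp this
    rw [pi_eq_sum_univ (R (s - m0)), map_sum] at hφR
    simp only [map_smul, smul_eq_mul] at hφR
    rw [← hφR]
    refine Finset.sum_congr rfl fun j _ => ?_
    have hsj : m0 + (s - m0) + (j : ℕ) = s + j := by omega
    rw [hR]
    simp only []
    rw [hsj]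
    ring


lemma trim_relation (F : PowerSeries ℚ) (hF : F ≠ 0) :
    ∀ k : ℕ, ∀ Q : ℕ → Polynomial ℚ, (∃ i, i ≤ k ∧ Q i ≠ 0) →
      (∑ i ∈ Finset.range (k + 1), (Q i : PowerSeries ℚ) * F ^ i = 0) →
      ∃ K : ℕ, ∃ Q' : ℕ → Polynomial ℚ, 1 ≤ K ∧ Q' 0 ≠ 0 ∧ Q' K ≠ 0 ∧
        ∑ i ∈ Finset.range (K + 1), (Q' i : PowerSeries ℚ) * F ^ i = 0 := by
  intro k
  induction k using Nat.strong_induction_on with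
  | _ k ih =>
    intro Q hex hsum
    by_cases hQk : Q k = 0
    · match k, hsum, hex, ih with
      | 0, hsum, hex, ih =>
        obtain ⟨i, hi, hQi⟩ := hex
        interval_cases i
        exact absurd hQk hQi
      | (k'+1), hsum, hex, ih =>
        rw [Finset.sum_range_succ, hQk, Polynomial.coe_zero, zero_mul, add_zero] at hsum
        refine ih k' (by omega) Q ?_ hsum
        obtain ⟨i, hi, hQi⟩ := hex
        refine ⟨i, ?_, hQi⟩
        rcases Nat.lt_or_ge i (k'+1) with h | h
        · omega
        · exfalso
          have : i = k' + 1 := by omega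
          rw [this] at hQi
          exact hQi hQk
    · by_cases hQ0 : Q 0 = 0
      · -- strip bottom
        have hk : k ≠ 0 := fun h => hQk (h ▸ hQ0)
        have hsum' : F * ∑ i ∈ Finset.range k, (Q (i+1) : PowerSeries ℚ) * F ^ i = 0 := by
          rw [Finset.mul_sum, ← hsum, Finset.sum_range_succ' _ k]
          rw [hQ0, Polynomial.coe_zero, zero_mul, add_zero]
          refine Finset.sum_congr rfl fun i _ => ?_
          ring
        have h2 : ∑ i ∈ Finset.range k, (Q (i+1) : PowerSeries ℚ) * F ^ i = 0 := by
          rcases mul_eq_zero.mp hsum' with h | h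
          · exact absurd h hF
          · exact h
        obtain ⟨k'', hk''⟩ : ∃ k'', k = k'' + 1 := ⟨k - 1, by omega⟩
        subst hk''
        refine ih k'' (by omega) (fun i => Q (i+1)) ⟨k'', le_rfl, hQk⟩ h2
      · -- both ends nonzero
        rcases Nat.eq_zero_or_pos k with hk0 | hkpos
        · exfalso
          subst hk0
          rw [Finset.sum_range_one, pow_zero, mul_one] at hsum
          rw [Polynomial.coe_eq_zero_iff] at hsum
          exact hQ0 hsum
        · exact ⟨k, Q, hkpos, hQ0, hQk, hsum⟩


lemma map_psDerivative {R S : Type*} [CommRing R] [CommRing S] (φ : R →+* S) (g : PowerSeries R) :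
    PowerSeries.map φ (d⁄dX R g) = d⁄dX S (PowerSeries.map φ g) := by
  ext n
  simp [PowerSeries.coeff_map, PowerSeries.coeff_derivative]

lemma map_coe_poly {R S : Type*} [CommSemiring R] [CommSemiring S] (φ : R →+* S) (P : Polynomial R) :
    PowerSeries.map φ (P : PowerSeries R) = ((P.map φ : Polynomial S) : PowerSeries S) := by
  ext n
  simp [PowerSeries.coeff_map, Polynomial.coeff_coe, Polynomial.coeff_map]

lemma map_mk_int {R : Type*} [CommRing R] (g : ℕ → ℤ) :
    PowerSeries.map (Int.castRingHom R) (PowerSeries.mk fun n => (g n : ℤ)) =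
      PowerSeries.mk fun n => (g n : R) := by
  ext n
  simp [PowerSeries.coeff_map]

lemma not_dvd_of_natAbs_lt {c : ℤ} {p : ℕ} (hc : c ≠ 0) (h : c.natAbs < p) : ¬ (p : ℤ) ∣ c := by
  intro hdvd
  have := Int.le_of_dvd (abs_pos.mpr hc) ((dvd_abs _ _).mpr hdvd)
  rw [Int.abs_eq_natAbs] at this
  omega

lemma modp_w (a fs : ℕ → ℤ) (h0 : a 0 = 1)
    (hAF : (PowerSeries.mk fun n => a n) * (PowerSeries.mk fun n => fs n) =
      d⁄dX ℤ (PowerSeries.mk fun n => a n))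
    (K : ℕ) (hK : 1 ≤ K) (S : ℕ → Polynomial ℤ) (hS0 : S 0 ≠ 0) (hSK : S K ≠ 0)
    (hrelZ : ∑ i ∈ Finset.range (K + 1),
      ((S i : PowerSeries ℤ) * (PowerSeries.mk fun n => fs n) ^ i) = 0)
    (p : ℕ) (hp : p.Prime)
    (hpbig : ((S 0).leadingCoeff.natAbs < p ∧ (S K).leadingCoeff.natAbs < p))
    (hLp : ∀ n q : ℕ, q ≤ p - 1 → (p : ℤ) ∣ a (n * p + q) - a n * a q) :
    ∃ w : Fin ((S K).natDegree + 1) → ZMod p, w ≠ 0 ∧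
      ∀ s : ℕ, (S 0).natDegree + 1 ≤ s →
        ∑ j : Fin ((S K).natDegree + 1), (fs (s + j) : ZMod p) * w j = 0 := by
  classical
  haveI : Fact p.Prime := ⟨hp⟩
  set r : ℕ := (S K).natDegree with hr
  set m0 : ℕ := (S 0).natDegree + 1 with hm0
  -- mod p reduction of the log-derivative identity
  have hGF : (PowerSeries.mk fun n => (a n : ZMod p)) * (PowerSeries.mk fun n => (fs n : ZMod p)) =
      d⁄dX (ZMod p) (PowerSeries.mk fun n => (a n : ZMod p)) := by
    have := congrArg (PowerSeries.map (Int.castRingHom (ZMod p))) hAF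
    rw [map_mul, map_mk_int, map_mk_int, map_psDerivative, map_mk_int] at this
    exact this
  have hGp := lucas_mod a hp hLp
  have hCF := gp_mul_F a fs h0 hGF hGp
  set Cp : Polynomial (ZMod p) := trunc p (PowerSeries.mk fun n => (a n : ZMod p)) with hCp
  have hCne : Cp ≠ 0 := by
    intro h
    have h1 : Cp.coeff 0 = 1 := by
      rw [hCp, PowerSeries.coeff_trunc, if_pos hp.pos]
      simp [h0]
    rw [h] at h1
    simp at h1
  -- mod p reduction of the algebraic relation
  set T : ℕ → Polynomial (ZMod p) := fun i => (S i).map (Int.castRingHom (ZMod p)) with hT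
  have hrelp : ∑ i ∈ Finset.range (K + 1),
      ((T i : PowerSeries (ZMod p)) * (PowerSeries.mk fun n => (fs n : ZMod p)) ^ i) = 0 := by
    have := congrArg (PowerSeries.map (Int.castRingHom (ZMod p))) hrelZ
    rw [map_sum, map_zero] at this
    rw [← this]
    refine Finset.sum_congr rfl fun i _ => ?_
    rw [map_mul, map_pow, map_coe_poly, map_mk_int]
  have hT0 : T 0 ≠ 0 := by
    intro h
    have : (T 0).coeff ((S 0).natDegree) = 0 := by rw [h]; simp
    rw [hT] at this
    simp only [Polynomial.coeff_map, eq_intCast] at this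
    rw [ZMod.intCast_zmod_eq_zero_iff_dvd] at this
    exact not_dvd_of_natAbs_lt (Polynomial.leadingCoeff_ne_zero.mpr hS0) hpbig.1 this
  have hTK : T K ≠ 0 := by
    intro h
    have : (T K).coeff ((S K).natDegree) = 0 := by rw [h]; simp
    rw [hT] at this
    simp only [Polynomial.coeff_map, eq_intCast] at this
    rw [ZMod.intCast_zmod_eq_zero_iff_dvd] at this
    exact not_dvd_of_natAbs_lt (Polynomial.leadingCoeff_ne_zero.mpr hSK) hpbig.2 this
  obtain ⟨u, v, hv0, hvdeg, hudeg, hvF⟩ := rational_small_degree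
    (PowerSeries.mk fun n => (fs n : ZMod p)) Cp hCne hCF K hK T hT0 hTK hrelp
  have hvdeg' : v.natDegree ≤ r := le_trans hvdeg Polynomial.natDegree_map_le
  have hudeg' : u.natDegree ≤ (S 0).natDegree := le_trans hudeg Polynomial.natDegree_map_le
  refine ⟨fun j => v.coeff (r - (j : ℕ)), ?_, ?_⟩
  · intro hzero
    have hj : v.natDegree < r + 1 := by omega
    have := congrFun hzero ⟨r - v.natDegree, by omega⟩
    simp only at this
    rw [show r - (r - v.natDegree) = v.natDegree by omega] at this
    exact Polynomial.leadingCoeff_ne_zero.mpr hv0 this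
  · intro s hs
    have hcoeff : PowerSeries.coeff (s + r)
        ((v : PowerSeries (ZMod p)) * (PowerSeries.mk fun n => (fs n : ZMod p))) = 0 := by
      rw [hvF, Polynomial.coeff_coe]
      exact Polynomial.coeff_eq_zero_of_natDegree_lt (by omega)
    rw [PowerSeries.coeff_mul, Finset.Nat.sum_antidiagonal_eq_sum_range_succ_mk] at hcoeff
    simp only [Polynomial.coeff_coe, PowerSeries.coeff_mk] at hcoeff
    have htrunc : ∑ l ∈ Finset.range (r + 1),
        v.coeff l * (fs (s + r - l) : ZMod p) = 0 := by
      have hsub : ∑ l ∈ Finset.range (r + 1), v.coeff l * (fs (s + r - l) : ZMod p) =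
          ∑ l ∈ Finset.range (s + r + 1), v.coeff l * (fs (s + r - l) : ZMod p) := by
        refine Finset.sum_subset (Finset.range_subset_range.mpr (by omega)) ?_
        intro x _ hxn
        rw [Finset.mem_range] at hxn
        rw [Polynomial.coeff_eq_zero_of_natDegree_lt (by omega), zero_mul]
      rw [hsub, hcoeff]
    have hrefl := Finset.sum_range_reflect
      (fun l => v.coeff l * (fs (s + r - l) : ZMod p)) (r + 1)
    rw [htrunc] at hrefl
    rw [Fin.sum_univ_eq_sum_range (fun j => (fs (s + j) : ZMod p) * v.coeff (r - j)) (r + 1)]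
    rw [← hrefl]
    refine Finset.sum_congr rfl fun j hj => ?_
    rw [Finset.mem_range] at hj
    have h1 : r + 1 - 1 - j = r - j := by omega
    have h2 : s + r - (r - j) = s + j := by omega
    rw [h1, h2, mul_comm]


/-- If `G = ∑ a_n x^n ∈ ℤ⟦x⟧` has `a_0 = 1` and the Lucas property, and `G'/G` is
algebraic over `ℚ(x)`, then `G'/G` is rational over `ℚ`. In particular, for all
large primes `p`, `G ≡ G^p · G_p (mod p)` where `G_p = ∑_{n ≤ p-1} a_n x^n`. -/
theorem lucas_logDeriv_rational (a : ℕ → ℤ) (h0 : a 0 = 1)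
    (hLucas : ∃ N : ℕ, ∀ p : ℕ, N ≤ p → p.Prime → ∀ n q : ℕ, q ≤ p - 1 →
      (p : ℤ) ∣ a (n * p + q) - a n * a q)
    (G : PowerSeries ℚ) (hG : G = PowerSeries.mk fun n => (a n : ℚ))
    (halg : ∃ k : ℕ, ∃ Q : ℕ → Polynomial ℚ, (∃ i, i ≤ k ∧ Q i ≠ 0) ∧
      ∑ i ∈ Finset.range (k + 1),
        (Q i : PowerSeries ℚ) * (psDeriv G * G⁻¹) ^ i = 0) :
    (∃ P R : Polynomial ℚ, R ≠ 0 ∧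
      (R : PowerSeries ℚ) * psDeriv G = (P : PowerSeries ℚ) * G) ∧
    (∃ N : ℕ, ∀ p : ℕ, N ≤ p → p.Prime →
      (PowerSeries.mk fun n => (a n : ZMod p)) =
        (PowerSeries.mk fun n => (a n : ZMod p)) ^ p *
          PowerSeries.mk (fun n => if n ≤ p - 1 then (a n : ZMod p) else 0)) := by
  classical
  obtain ⟨N, hN⟩ := hLucas
  refine ⟨?_, ⟨N, fun p hp hpp => lucas_mod a hpp (hN p hp hpp)⟩⟩
  -- integer-coefficient logarithmic derivative
  set A : PowerSeries ℤ := PowerSeries.mk fun n => a n with hA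
  have hconstA : PowerSeries.constantCoeff A = 1 := by
    rw [hA, ← PowerSeries.coeff_zero_eq_constantCoeff_apply, PowerSeries.coeff_mk, h0]
  set fs : ℕ → ℤ := fun n => PowerSeries.coeff n (d⁄dX ℤ A * PowerSeries.invOfUnit A 1)
    with hfs
  have hmkfs : PowerSeries.mk fs = d⁄dX ℤ A * PowerSeries.invOfUnit A 1 := by
    ext n
    rw [PowerSeries.coeff_mk]
  have hAF : A * PowerSeries.mk fs = d⁄dX ℤ A := by
    rw [hmkfs]
    calc A * (d⁄dX ℤ A * PowerSeries.invOfUnit A 1)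
        = (A * PowerSeries.invOfUnit A 1) * d⁄dX ℤ A := by ring
      _ = d⁄dX ℤ A := by
          rw [PowerSeries.mul_invOfUnit A 1 (by rw [hconstA]; rfl), one_mul]
  have hGA : G = PowerSeries.map (Int.castRingHom ℚ) A := by
    rw [hG, hA, map_mk_int]
  set FQ : PowerSeries ℚ := PowerSeries.mk fun n => (fs n : ℚ) with hFQdef
  have hpsd : psDeriv G = d⁄dX ℚ G := by
    ext n
    rw [psDeriv, PowerSeries.coeff_mk, PowerSeries.coeff_derivative]
    ring
  have hGQF : G * FQ = psDeriv G := by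
    have hmap := congrArg (PowerSeries.map (Int.castRingHom ℚ)) hAF
    rw [map_mul, map_psDerivative, map_mk_int] at hmap
    rw [hpsd, hGA, hFQdef]
    exact hmap
  have hconstG : PowerSeries.constantCoeff G = 1 := by
    rw [hG, ← PowerSeries.coeff_zero_eq_constantCoeff_apply, PowerSeries.coeff_mk, h0]
    norm_num
  have hFQeq : psDeriv G * G⁻¹ = FQ := by
    have h1 : G * G⁻¹ = 1 := PowerSeries.mul_inv_cancel G (by rw [hconstG]; exact one_ne_zero)
    calc psDeriv G * G⁻¹ = (G * FQ) * G⁻¹ := by rw [hGQF]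
      _ = FQ * (G * G⁻¹) := by ring
      _ = FQ := by rw [h1, mul_one]
  by_cases hFQ0 : FQ = 0
  · refine ⟨0, 1, one_ne_zero, ?_⟩
    have hz : psDeriv G = 0 := by rw [← hGQF, hFQ0, mul_zero]
    rw [hz, Polynomial.coe_one, Polynomial.coe_zero, one_mul, zero_mul]
  obtain ⟨k, Q, hex, hsum⟩ := halg
  rw [hFQeq] at hsum
  obtain ⟨K, Q', hK1, hQ'0, hQ'K, hrelQ⟩ := trim_relation FQ hFQ0 k Q hex hsum
  -- clear denominators
  set Q'' : ℕ → Polynomial ℚ := fun i => if i ≤ K then Q' i else 0 with hQ''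
  set c : ℤ := ∏ i ∈ Finset.range (K+1), ∏ n ∈ (Q'' i).support, (((Q'' i).coeff n).den : ℤ)
    with hc
  have hcpos : 0 < c := by
    rw [hc]
    refine Finset.prod_pos fun i _ => Finset.prod_pos fun n _ => ?_
    positivity
  have hcdvd : ∀ i, ∀ n, (((Q'' i).coeff n).den : ℤ) ∣ c := by
    intro i n
    by_cases hi : i ≤ K
    · by_cases hn : n ∈ (Q'' i).support
      · exact dvd_trans
          (Finset.dvd_prod_of_mem (fun n => (((Q'' i).coeff n).den : ℤ)) hn)
          (Finset.dvd_prod_of_mem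
            (fun i => ∏ n ∈ (Q'' i).support, (((Q'' i).coeff n).den : ℤ))
            (Finset.mem_range.mpr (by omega)))
      · rw [Polynomial.notMem_support_iff] at hn
        rw [hn]
        simp
    · have hz : Q'' i = 0 := by rw [hQ'']; simp [hi]
      rw [hz]
      simp
  have hSex : ∀ i, ∃ S : Polynomial ℤ,
      S.map (Int.castRingHom ℚ) = Polynomial.C (c : ℚ) * Q'' i :=
    fun i => poly_clear _ c (hcdvd i)
  choose S hSmap using hSex
  have hCcne : (Polynomial.C (c : ℚ)) ≠ 0 := by
    rw [ne_eq, Polynomial.C_eq_zero]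
    exact_mod_cast hcpos.ne'
  have hQ''0 : Q'' 0 = Q' 0 := by rw [hQ'']; simp
  have hQ''K : Q'' K = Q' K := by rw [hQ'']; simp
  have hS0 : S 0 ≠ 0 := by
    intro h
    have hm := hSmap 0
    rw [h, Polynomial.map_zero, hQ''0] at hm
    exact (mul_ne_zero hCcne hQ'0) hm.symm
  have hSK : S K ≠ 0 := by
    intro h
    have hm := hSmap K
    rw [h, Polynomial.map_zero, hQ''K] at hm
    exact (mul_ne_zero hCcne hQ'K) hm.symm
  -- relation over ℤ
  have hrelZ : ∑ i ∈ Finset.range (K + 1),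
      ((S i : PowerSeries ℤ) * (PowerSeries.mk fun n => fs n) ^ i) = 0 := by
    have hmap0 : PowerSeries.map (Int.castRingHom ℚ) (∑ i ∈ Finset.range (K+1),
        ((S i : PowerSeries ℤ) * (PowerSeries.mk fun n => fs n) ^ i)) = 0 := by
      rw [map_sum]
      have heach : ∀ i ∈ Finset.range (K+1), PowerSeries.map (Int.castRingHom ℚ)
          ((S i : PowerSeries ℤ) * (PowerSeries.mk fun n => fs n) ^ i) =
          ((Polynomial.C (c : ℚ) : Polynomial ℚ) : PowerSeries ℚ) *
            ((Q' i : PowerSeries ℚ) * FQ ^ i) := by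
        intro i hi
        rw [Finset.mem_range] at hi
        rw [map_mul, map_pow, map_coe_poly, map_mk_int, hSmap i]
        have hile : i ≤ K := by omega
        have hQi : Q'' i = Q' i := by simp [hQ'', hile]
        rw [hQi, Polynomial.coe_mul, hFQdef]
        ring
      rw [Finset.sum_congr rfl heach, ← Finset.mul_sum, hrelQ, mul_zero]
    ext n
    have hcn := congrArg (PowerSeries.coeff n) hmap0
    rw [PowerSeries.coeff_map, map_zero] at hcn
    rw [map_zero]
    simp only [eq_intCast] at hcn
    exact_mod_cast hcn
  -- thresholds
  set r : ℕ := (S K).natDegree with hr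
  set m0 : ℕ := (S 0).natDegree + 1 with hm0
  set N2 : ℕ := max N (max ((S 0).leadingCoeff.natAbs + 1) ((S K).leadingCoeff.natAbs + 1))
    with hN2
  have hw : ∀ p : ℕ, N2 ≤ p → p.Prime →
      ∃ w : Fin (r + 1) → ZMod p, w ≠ 0 ∧
        ∀ s : ℕ, m0 ≤ s →
          ∑ j : Fin (r + 1), (fs (s + j) : ZMod p) * w j = 0 := by
    intro p hpN2 hpp
    exact modp_w a fs h0 hAF K hK1 S hS0 hSK hrelZ p hpp ⟨by omega, by omega⟩
      (hN p (by omega) hpp)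
  have hdet := det_zero_of_modp fs r m0 N2 hw
  obtain ⟨cv, hcv0, hcv⟩ := exists_annihilator fs r m0 hdet
  set V : Polynomial ℚ := ∑ j : Fin (r+1), Polynomial.C (cv j) * Polynomial.X ^ (r - (j:ℕ))
    with hV
  have hVne : V ≠ 0 := by
    obtain ⟨j0, hj0⟩ := Function.ne_iff.mp hcv0
    intro hVz
    have hcoeffV : V.coeff (r - (j0:ℕ)) = cv j0 := by
      rw [hV, Polynomial.finset_sum_coeff]
      simp only [Polynomial.coeff_C_mul, Polynomial.coeff_X_pow]
      rw [Finset.sum_eq_single_of_mem j0 (Finset.mem_univ j0)]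
      · rw [if_pos rfl, mul_one]
      · intro b _ hbne
        have hb : (b:ℕ) ≤ r := Nat.lt_succ_iff.mp b.isLt
        have hj : (j0:ℕ) ≤ r := Nat.lt_succ_iff.mp j0.isLt
        have hbv : (b:ℕ) ≠ (j0:ℕ) := fun h => hbne (Fin.ext h)
        rw [if_neg (by omega), mul_zero]
    rw [hVz, Polynomial.coeff_zero] at hcoeffV
    exact hj0 (by rw [Pi.zero_apply]; exact hcoeffV.symm)
  have hVF : ∀ M : ℕ, m0 + r ≤ M →
      PowerSeries.coeff M ((V : PowerSeries ℚ) * FQ) = 0 := by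
    intro M hM
    have hVcoe : (V : PowerSeries ℚ) = ∑ j : Fin (r+1),
        ((Polynomial.C (cv j) * Polynomial.X ^ (r - (j:ℕ)) : Polynomial ℚ) : PowerSeries ℚ) := by
      rw [hV, ← Polynomial.coeToPowerSeries.ringHom_apply, map_sum]
      refine Finset.sum_congr rfl fun j _ => ?_
      rw [Polynomial.coeToPowerSeries.ringHom_apply]
    rw [hVcoe, Finset.sum_mul, map_sum]
    have heach : ∀ j : Fin (r+1), PowerSeries.coeff M
        (((Polynomial.C (cv j) * Polynomial.X ^ (r - (j:ℕ)) : Polynomial ℚ) : PowerSeries ℚ) * FQ)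
        = cv j * (fs ((M - r) + (j:ℕ)) : ℚ) := by
      intro j
      have hj : (j:ℕ) ≤ r := Nat.lt_succ_iff.mp j.isLt
      rw [Polynomial.coe_mul, Polynomial.coe_C, Polynomial.coe_pow, Polynomial.coe_X,
        mul_assoc, PowerSeries.coeff_C_mul]
      congr 1
      have hM' : M = (M - (r - (j:ℕ))) + (r - (j:ℕ)) := by omega
      conv_lhs => rw [hM']
      rw [PowerSeries.coeff_X_pow_mul, hFQdef, PowerSeries.coeff_mk]
      have harg : M - (r - (j:ℕ)) = (M - r) + (j:ℕ) := by omega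
      rw [harg]
    rw [Finset.sum_congr rfl (fun j _ => heach j)]
    exact hcv (M - r) (by omega)
  set P : Polynomial ℚ := trunc (m0 + r) ((V : PowerSeries ℚ) * FQ) with hP
  have hPeq : (P : PowerSeries ℚ) = (V : PowerSeries ℚ) * FQ := by
    ext n
    rw [Polynomial.coeff_coe, hP, PowerSeries.coeff_trunc]
    split_ifs with h
    · rfl
    · exact (hVF n (by omega)).symm
  refine ⟨P, V, hVne, ?_⟩
  calc (V : PowerSeries ℚ) * psDeriv G = (V : PowerSeries ℚ) * (G * FQ) := by rw [hGQF]
    _ = ((V : PowerSeries ℚ) * FQ) * G := by ring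
    _ = (P : PowerSeries ℚ) * G := by rw [hPeq]
end
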